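/- arXiv:2010.08192 — 6 statements merged into one kernel-verified Lean document; each statement's English description precedes it below -/
import Mathlib

section
/- The n-dimensional Euclidean space ℓ_2^n (n ≥ 2) embeds linearly isometrically into ℓ_p whenever p is a positive even integer. -/
open scoped BigOperators
open Real MeasureTheory

noncomputable section AuxHilbert

/-! ### Generic auxiliary lemmas -/

/-- Sum over an embedded index set via a dite. -/
lemma sum_dite_emb {M : Type*} [AddCommMonoid M] {ι : Type*} [Fintype ι] {κ : Type*}
    [Fintype κ] [DecidableEq κ] (e : ι ↪ κ) (F : ι → M) :
    ∑ j : κ, (if h : ∃ i, e i = j then F h.choose else 0) = ∑ i, F i := by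
  classical
  rw [← Finset.sum_subset (Finset.subset_univ (Finset.univ.map e))
    (fun j _ hj => by
      rw [dif_neg]
      rintro ⟨i, hi⟩
      exact hj (Finset.mem_map.mpr ⟨i, Finset.mem_univ _, hi⟩)), Finset.sum_map]
  apply Finset.sum_congr rfl
  intro i _
  have h : ∃ i', e i' = e i := ⟨i, rfl⟩
  rw [dif_pos h]
  exact congrArg F (e.injective h.choose_spec)

/-- The convex hull of a compact set in a finite-dimensional normed space is compact. -/
lemma isCompact_convexHull_of_isCompact {W : Type*} [NormedAddCommGroup W] [NormedSpace ℝ W]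
    [FiniteDimensional ℝ W] {s : Set W} (hs : IsCompact s) : IsCompact (convexHull ℝ s) := by
  classical
  rcases s.eq_empty_or_nonempty with rfl | ⟨b₀, hb₀⟩
  · simp
  set d := Module.finrank ℝ W + 1 with hd
  have hfc : Continuous (fun p : (Fin d → ℝ) × (Fin d → W) => ∑ j, p.1 j • p.2 j) := by
    refine continuous_finset_sum _ fun j _ => ?_
    exact ((continuous_apply j).comp continuous_fst).smul ((continuous_apply j).comp continuous_snd)
  have hT : IsCompact ((stdSimplex ℝ (Fin d)) ×ˢ (Set.pi Set.univ fun _ : Fin d => s)) :=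
    (isCompact_stdSimplex (𝕜 := ℝ) (ι := Fin d)).prod (isCompact_univ_pi fun _ => hs)
  have himg : convexHull ℝ s = (fun p : (Fin d → ℝ) × (Fin d → W) => ∑ j, p.1 j • p.2 j) ''
      ((stdSimplex ℝ (Fin d)) ×ˢ (Set.pi Set.univ fun _ : Fin d => s)) := by
    apply Set.Subset.antisymm
    · intro x hx
      obtain ⟨ι, hι, z, w, hzs, hai, hwpos, hwsum, hxx⟩ :=
        eq_pos_convex_span_of_mem_convexHull hx
      have hcard : Fintype.card ι ≤ d :=
        hai.card_le_finrank_succ.trans (Nat.add_le_add_right (Submodule.finrank_le _) 1)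
      obtain ⟨e⟩ : Nonempty (ι ↪ Fin d) := by
        have := Fintype.card_fin d
        exact Function.Embedding.nonempty_of_card_le (by omega)
      set w' : Fin d → ℝ := fun j => if h : ∃ i, e i = j then w h.choose else 0 with hw'
      set z' : Fin d → W := fun j => if h : ∃ i, e i = j then z h.choose else b₀ with hz'
      refine ⟨(w', z'), ⟨⟨?_, ?_⟩, ?_⟩, ?_⟩
      · intro j
        by_cases h : ∃ i, e i = j
        · simp only [hw', dif_pos h]
          exact (hwpos _).le
        · simp only [hw', dif_neg h, le_refl]
      · rw [show ∑ j, w' j = ∑ i, w i from sum_dite_emb e w]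
        exact hwsum
      · intro j _
        by_cases h : ∃ i, e i = j
        · simp only [hz', dif_pos h]
          exact hzs ⟨_, rfl⟩
        · simp only [hz', dif_neg h]
          exact hb₀
      · have : ∀ j, w' j • z' j = if h : ∃ i, e i = j then w h.choose • z h.choose else 0 := by
          intro j
          by_cases h : ∃ i, e i = j <;> simp [hw', hz', h]
        simp only [this]
        rw [sum_dite_emb e (fun i => w i • z i)]
        exact hxx
    · rintro x ⟨⟨w, z⟩, ⟨⟨hw0, hw1⟩, hz⟩, rfl⟩
      exact (convex_convexHull ℝ s).sum_mem (fun j _ => hw0 j) hw1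
        (fun j _ => subset_convexHull ℝ s (hz j (Set.mem_univ j)))
  rw [himg]
  exact hT.image hfc

/-- The cone over a compact set avoiding the origin is closed. -/
lemma isClosed_cone_of_isCompact {W : Type*} [NormedAddCommGroup W] [NormedSpace ℝ W]
    {K : Set W} (hK : IsCompact K) (h0 : (0 : W) ∉ K) :
    IsClosed {w : W | ∃ t : ℝ, 0 ≤ t ∧ ∃ q ∈ K, w = t • q} := by
  rcases K.eq_empty_or_nonempty with rfl | hne
  · convert isClosed_empty
    ext w
    simp
  obtain ⟨q₀, hq₀K, hq₀min'⟩ := hK.exists_isMinOn hne continuous_norm.continuousOn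
  have hq₀min : ∀ y ∈ K, ‖q₀‖ ≤ ‖y‖ := fun y hy => isMinOn_iff.mp hq₀min' y hy
  have hm : 0 < ‖q₀‖ := norm_pos_iff.mpr (fun h => h0 (h ▸ hq₀K))
  apply IsSeqClosed.isClosed
  intro xs x hxs hlim
  choose t ht q hq hx using hxs
  obtain ⟨C, hC⟩ : BddAbove (Set.range fun j => ‖xs j‖) := hlim.norm.bddAbove_range
  have htb : ∀ j, t j ≤ C / ‖q₀‖ := by
    intro j
    have h1 : t j * ‖q₀‖ ≤ t j * ‖q j‖ :=
      mul_le_mul_of_nonneg_left (hq₀min (q j) (hq j)) (ht j)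
    have h2 : t j * ‖q j‖ = ‖xs j‖ := by
      rw [hx j, norm_smul, Real.norm_eq_abs, abs_of_nonneg (ht j)]
    have h3 : ‖xs j‖ ≤ C := hC ⟨j, rfl⟩
    rw [le_div_iff₀ hm]
    linarith
  obtain ⟨qq, hqqK, φ1, hφ1, hq1⟩ := hK.tendsto_subseq hq
  obtain ⟨tt, htt, φ2, hφ2, ht2⟩ := (isCompact_Icc (a := (0:ℝ)) (b := C / ‖q₀‖)).tendsto_subseq
    (x := fun l => t (φ1 l)) (fun l => ⟨ht _, htb _⟩)
  have hlim1 : Filter.Tendsto (fun l => xs (φ1 (φ2 l))) Filter.atTop (nhds x) :=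
    hlim.comp ((hφ1.comp hφ2).tendsto_atTop)
  have hlim2 : Filter.Tendsto (fun l => xs (φ1 (φ2 l))) Filter.atTop (nhds (tt • qq)) := by
    have h1 : Filter.Tendsto (fun l => q (φ1 (φ2 l))) Filter.atTop (nhds qq) :=
      hq1.comp hφ2.tendsto_atTop
    have := ht2.smul h1
    apply this.congr
    intro l
    exact (hx _).symm
  exact ⟨tt, htt.1, qq, hqqK, tendsto_nhds_unique hlim1 hlim2⟩

/-! ### The moment construction -/

variable (n k : ℕ)

local notation "E" => EuclideanSpace ℝ (Fin n)

/-- The index set of monomials of degree `2k` in `n` variables. -/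
def myA : Finset (Fin n → ℕ) := Finset.piAntidiag Finset.univ (2 * k)

/-- The moment map: all monomials of degree `2k` evaluated at `u`. -/
def myPhi (u : E) : ↥(myA n k) → ℝ := fun m => ∏ i, u i ^ (m.1 i)

/-- The dual coefficient vector of `x`. -/
def myPsi (x : E) : ↥(myA n k) → ℝ :=
  fun m => (Nat.multinomial Finset.univ m.1 : ℝ) * ∏ i, x i ^ (m.1 i)

lemma key_pairing (x u : E) :
    (∑ i, x i * u i) ^ (2 * k) = ∑ m : ↥(myA n k), myPsi n k x m * myPhi n k u m := by
  classical
  rw [Finset.sum_pow_eq_sum_piAntidiag]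
  simp only [myPsi, myPhi]
  rw [Finset.sum_coe_sort (myA n k)
    (fun a => ((Nat.multinomial Finset.univ a : ℝ) * ∏ i, x i ^ a i) * ∏ i, u i ^ a i)]
  apply Finset.sum_congr rfl
  intro m _
  have hprod : ∏ i, (x i * u i) ^ m i = (∏ i, x i ^ m i) * ∏ i, u i ^ m i := by
    rw [← Finset.prod_mul_distrib]
    apply Finset.prod_congr rfl
    intro i _
    rw [mul_pow]
  rw [hprod, mul_assoc]

lemma key_homog (c : ℝ) (u : E) : myPhi n k (c • u) = c ^ (2 * k) • myPhi n k u := by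
  funext m
  have hm := (Finset.mem_piAntidiag.mp m.2).1
  simp only [myPhi, Pi.smul_apply, smul_eq_mul]
  calc ∏ i, (c • u) i ^ m.1 i = ∏ i, (c ^ m.1 i * u i ^ m.1 i) := by
        apply Finset.prod_congr rfl
        intro i _
        rw [PiLp.smul_apply, smul_eq_mul, mul_pow]
    _ = (∏ i, c ^ m.1 i) * ∏ i, u i ^ m.1 i := Finset.prod_mul_distrib
    _ = c ^ (2 * k) * ∏ i, u i ^ m.1 i := by
        rw [Finset.prod_pow_eq_pow_sum, hm]

lemma cont_phi : Continuous (myPhi n k) := by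
  apply continuous_pi
  intro m
  apply continuous_finset_prod
  intro i _
  exact ((continuous_apply i).comp (PiLp.continuous_ofLp 2 (fun _ : Fin n => ℝ))).pow _

lemma phi_zero (hk : 0 < k) : myPhi n k 0 = 0 := by
  funext m
  have hm := (Finset.mem_piAntidiag.mp m.2).1
  have : ∃ i ∈ Finset.univ, m.1 i ≠ 0 := by
    by_contra h
    push_neg at h
    rw [Finset.sum_eq_zero h] at hm
    omega
  obtain ⟨i, hi, hne⟩ := this
  simp only [myPhi]
  rw [Finset.prod_eq_zero hi]
  · rfl
  · show (0 : ℝ) ^ m.1 i = 0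
    exact zero_pow hne

/-! ### The Gaussian-type measure -/

def myDens : E → NNReal := fun u => Real.toNNReal (rexp (-‖u‖ ^ 2))

def myGamma : Measure E := volume.withDensity (fun u => (myDens n u : ENNReal))

lemma meas_dens : Measurable (myDens n) :=
  (continuous_real_toNNReal.comp (continuous_exp.comp (continuous_norm.pow 2).neg)).measurable

/-- Master integrability lemma. -/
lemma integrable_master (m : Fin n → ℕ) :
    Integrable (fun u : E => (∏ i, u i ^ m i) * rexp (-‖u‖ ^ 2)) := by
  have h1 : ∀ i : Fin n, Integrable (fun t : ℝ => t ^ m i * rexp (-t ^ 2)) := by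
    intro i
    have h := integrable_rpow_mul_exp_neg_mul_sq (b := 1) one_pos
      (s := (m i : ℝ)) (lt_of_lt_of_le neg_one_lt_zero (Nat.cast_nonneg _))
    simpa [Real.rpow_natCast, neg_mul, one_mul] using h
  have h2 : Integrable (fun v : Fin n → ℝ => ∏ i, (v i ^ m i * rexp (-(v i) ^ 2))) :=
    Integrable.fintype_prod (f := fun i (t : ℝ) => t ^ m i * rexp (-t ^ 2)) h1
  have hmp := (EuclideanSpace.volume_preserving_symm_measurableEquiv_toLp (Fin n)).symm
  rw [← hmp.integrable_comp_emb ((MeasurableEquiv.toLp 2 (Fin n → ℝ)).measurableEmbedding)]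
  have heq : (fun u : E => (∏ i, u i ^ m i) * rexp (-‖u‖ ^ 2)) ∘
      (MeasurableEquiv.toLp 2 (Fin n → ℝ))
      = fun v : Fin n → ℝ => ∏ i, (v i ^ m i * rexp (-(v i) ^ 2)) := by
    funext v
    have happ : ∀ i, ((MeasurableEquiv.toLp 2 (Fin n → ℝ)) v) i = v i := fun i => rfl
    have hnorm : ‖(MeasurableEquiv.toLp 2 (Fin n → ℝ)) v‖ ^ 2 = ∑ i, v i ^ 2 := by
      rw [EuclideanSpace.norm_eq]
      rw [Real.sq_sqrt (by positivity)]
      apply Finset.sum_congr rfl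
      intro i _
      rw [happ, Real.norm_eq_abs, sq_abs]
    simp only [Function.comp_apply, happ, hnorm]
    rw [Finset.prod_mul_distrib]
    congr 1
    rw [← Real.exp_sum]
    congr 1
    rw [← Finset.sum_neg_distrib]
  rw [MeasurableEquiv.symm_symm, heq]
  exact h2

lemma integrable_phi_gamma (m : ↥(myA n k)) :
    Integrable (fun u => myPhi n k u m) (myGamma n) := by
  rw [myGamma, integrable_withDensity_iff_integrable_smul (meas_dens n)]
  refine (integrable_master n m.1).congr (Filter.Eventually.of_forall fun u => ?_)
  simp only [myPhi, NNReal.smul_def, smul_eq_mul, myDens,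
    Real.coe_toNNReal _ (Real.exp_nonneg _)]
  ring

lemma gamma_finite : IsFiniteMeasure (myGamma n) := by
  have h : Integrable (fun u : E => rexp (-‖u‖ ^ 2)) := by
    simpa using integrable_master n (fun _ => 0)
  exact isFiniteMeasure_withDensity_ofReal h.hasFiniteIntegral

lemma gamma_ne_zero : myGamma n ≠ 0 := by
  intro h
  have h2 : myGamma n Set.univ = 0 := by rw [h]; rfl
  rw [myGamma, withDensity_apply _ MeasurableSet.univ, Measure.restrict_univ,
    lintegral_eq_zero_iff ((meas_dens n).coe_nnreal_ennreal)] at h2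
  have h3 : {u : E | ¬ ((myDens n u : ENNReal) = 0)} = Set.univ := by
    ext u
    simp [myDens, Real.toNNReal_eq_zero, not_le, Real.exp_pos]
  have h4 : (volume : Measure E) Set.univ = 0 := by
    have h5 := h2
    rw [Filter.EventuallyEq, ae_iff] at h5
    simp only [Pi.zero_apply] at h5
    rw [h3] at h5
    exact h5
  exact (isOpen_univ.measure_ne_zero (volume : Measure E) ⟨0, trivial⟩) h4

lemma integrable_phi_vec : Integrable (myPhi n k) (myGamma n) := by
  classical
  have hrep : myPhi n k = fun u => ∑ m : ↥(myA n k), (myPhi n k u m) • (Pi.single m (1 : ℝ) : ↥(myA n k) → ℝ) := by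
    funext u
    funext m'
    rw [Finset.sum_apply]
    simp [Pi.single_apply]
  rw [hrep]
  exact integrable_finset_sum _ fun m _ => (integrable_phi_gamma n k m).smul_const _

/-! ### The cone -/

def myB : Set (↥(myA n k) → ℝ) := myPhi n k '' {u : E | ‖u‖ = 1}

def myS : Set (↥(myA n k) → ℝ) :=
  {w | ∃ t : ℝ, 0 ≤ t ∧ ∃ q ∈ convexHull ℝ (myB n k), w = t • q}

lemma compact_myB : IsCompact (myB n k) := by
  have h1 : {u : E | ‖u‖ = 1} = Metric.sphere (0 : E) 1 := by
    ext u
    simp [mem_sphere_zero_iff_norm]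
  rw [myB, h1]
  exact (isCompact_sphere _ _).image (cont_phi n k)

lemma convex_myS : Convex ℝ (myS n k) := by
  intro w1 h1 w2 h2 a b ha hb hab
  obtain ⟨t1, ht1, q1, hq1, rfl⟩ := h1
  obtain ⟨t2, ht2, q2, hq2, rfl⟩ := h2
  by_cases hs : a * t1 + b * t2 = 0
  · have ha1 : a * t1 = 0 := by nlinarith
    have hb1 : b * t2 = 0 := by nlinarith
    have h0 : a • t1 • q1 + b • t2 • q2 = 0 := by
      rw [smul_smul, smul_smul, ha1, hb1]
      simp
    rw [h0]
    exact ⟨0, le_rfl, q1, hq1, by simp⟩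
  · have hs0 : 0 < a * t1 + b * t2 :=
      lt_of_le_of_ne (by positivity) (Ne.symm hs)
    refine ⟨a * t1 + b * t2, hs0.le,
      (a * t1 / (a * t1 + b * t2)) • q1 + (b * t2 / (a * t1 + b * t2)) • q2, ?_, ?_⟩
    · exact (convex_convexHull ℝ _) hq1 hq2 (by positivity) (by positivity)
        (by field_simp)
    · rw [smul_add, smul_smul, smul_smul, smul_smul, smul_smul]
      congr 1 <;> · congr 1; field_simp
  
lemma sphere_unit [NeZero n] : ‖(EuclideanSpace.single (0 : Fin n) (1 : ℝ) : E)‖ = 1 := by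
  rw [EuclideanSpace.norm_single]
  exact norm_one

lemma phi_mem_myS [NeZero n] (hk : 0 < k) (u : E) : myPhi n k u ∈ myS n k := by
  by_cases hu : u = 0
  · subst hu
    rw [phi_zero n k hk]
    exact ⟨0, le_rfl, myPhi n k (EuclideanSpace.single (0 : Fin n) (1 : ℝ)),
      subset_convexHull ℝ _ ⟨_, sphere_unit n, rfl⟩, by simp⟩
  · refine ⟨‖u‖ ^ (2 * k), by positivity, myPhi n k (‖u‖⁻¹ • u),
      subset_convexHull ℝ _ ⟨‖u‖⁻¹ • u, norm_smul_inv_norm hu, rfl⟩, ?_⟩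
    have : u = ‖u‖ • (‖u‖⁻¹ • u) := (smul_inv_smul₀ (norm_ne_zero_iff.mpr hu) u).symm
    conv_lhs => rw [this]
    rw [key_homog]

/-! ### The separating functional -/

def myMi (i : Fin n) : Fin n → ℕ := fun j => if j = i then 2 * k else 0

lemma myMi_mem (i : Fin n) : myMi n k i ∈ myA n k := by
  rw [myA, Finset.mem_piAntidiag]
  constructor
  · show (∑ j, if j = i then 2 * k else 0) = 2 * k
    rw [Finset.sum_ite_eq' Finset.univ i (fun _ => 2 * k)]
    simp
  · intro i' _
    exact Finset.mem_univ _

def myPhiF : (↥(myA n k) → ℝ) → ℝ := fun w => ∑ i : Fin n, w ⟨myMi n k i, myMi_mem n k i⟩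

lemma myPhiF_linear : IsLinearMap ℝ (myPhiF n k) :=
  ⟨fun a b => by simp [myPhiF, Finset.sum_add_distrib],
   fun c a => by simp [myPhiF, Finset.mul_sum]⟩

lemma myPhiF_cont : Continuous (myPhiF n k) :=
  continuous_finset_sum _ fun i _ => continuous_apply _

lemma myPhiF_phi (u : E) : myPhiF n k (myPhi n k u) = ∑ i, u i ^ (2 * k) := by
  apply Finset.sum_congr rfl
  intro i _
  show ∏ j, u j ^ (if j = i then 2 * k else 0) = u i ^ (2 * k)
  rw [Finset.prod_eq_single i]
  · rw [if_pos rfl]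
  · intro j _ hj
    rw [if_neg hj, pow_zero]
  · intro h
    exact absurd (Finset.mem_univ i) h

lemma myPhiF_pos_on_B (hk : 0 < k) {q : ↥(myA n k) → ℝ} (hq : q ∈ myB n k) :
    0 < myPhiF n k q := by
  obtain ⟨u, hu, rfl⟩ := hq
  rw [myPhiF_phi]
  have hex : ∃ i, u i ≠ 0 := by
    by_contra h
    push_neg at h
    have hz : ‖u‖ = 0 := by
      rw [EuclideanSpace.norm_eq]
      simp [h]
    rw [Set.mem_setOf_eq, hz] at hu
    exact one_ne_zero hu.symm
  obtain ⟨i0, hi0⟩ := hex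
  refine Finset.sum_pos' (fun i _ => Even.pow_nonneg (even_two_mul k) _)
    ⟨i0, Finset.mem_univ _, ?_⟩
  exact Even.pow_pos (even_two_mul k) hi0

lemma zero_not_mem_hull [NeZero n] (hk : 0 < k) :
    (0 : ↥(myA n k) → ℝ) ∉ convexHull ℝ (myB n k) := by
  have hBne : (myB n k).Nonempty := ⟨_, ⟨_, sphere_unit n, rfl⟩⟩
  obtain ⟨qm, hqmB, hmin'⟩ := (compact_myB n k).exists_isMinOn hBne (myPhiF_cont n k).continuousOn
  have hδ : 0 < myPhiF n k qm := myPhiF_pos_on_B n k hk hqmB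
  intro h0
  have hsub : convexHull ℝ (myB n k) ⊆ {w | myPhiF n k qm ≤ myPhiF n k w} :=
    convexHull_min (fun b hb => isMinOn_iff.mp hmin' b hb)
      (convex_halfSpace_ge (myPhiF_linear n k) _)
  have h1 : myPhiF n k qm ≤ myPhiF n k 0 := hsub h0
  have h2 : myPhiF n k 0 = 0 := by simp [myPhiF]
  rw [h2] at h1
  linarith

lemma closed_myS [NeZero n] (hk : 0 < k) : IsClosed (myS n k) :=
  isClosed_cone_of_isCompact (isCompact_convexHull_of_isCompact (compact_myB n k))
    (zero_not_mem_hull n k hk)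

/-! ### The rotation-invariant integral -/

def myC [NeZero n] : ℝ := ∫ u : E, (u 0) ^ (2 * k) * rexp (-‖u‖ ^ 2)

lemma integrable_c [NeZero n] :
    Integrable (fun u : E => (u 0) ^ (2 * k) * rexp (-‖u‖ ^ 2)) := by
  refine (integrable_master n (Pi.single (0 : Fin n) (2 * k))).congr
    (Filter.Eventually.of_forall fun u => ?_)
  show (∏ i : Fin n, u i ^ Pi.single (0 : Fin n) (2 * k) i) * rexp (-‖u‖ ^ 2)
    = u 0 ^ (2 * k) * rexp (-‖u‖ ^ 2)
  congr 1
  rw [Finset.prod_eq_single (0 : Fin n)]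
  · rw [Pi.single_eq_same]
  · intro j _ hj
    rw [Pi.single_eq_of_ne hj, pow_zero]
  · intro h'
    exact absurd (Finset.mem_univ _) h'

lemma myC_pos [NeZero n] (hk : 0 < k) : 0 < myC n k := by
  rw [myC, integral_pos_iff_support_of_nonneg
    (fun u => mul_nonneg (Even.pow_nonneg (even_two_mul k) _) (Real.exp_nonneg _))
    (integrable_c n k)]
  have hsupp : (Function.support fun u : E => (u 0) ^ (2 * k) * rexp (-‖u‖ ^ 2))
      = {u : E | u 0 ≠ 0} := by
    ext u
    simp [Function.mem_support, mul_eq_zero, Real.exp_ne_zero,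
      pow_eq_zero_iff (show 2 * k ≠ 0 by omega)]
  rw [hsupp]
  set lm : EuclideanSpace ℝ (Fin n) →ₗ[ℝ] ℝ :=
    { toFun := fun u => u 0, map_add' := fun a b => rfl, map_smul' := fun c a => rfl } with hlm
  have hker : volume (↑(LinearMap.ker lm) : Set (EuclideanSpace ℝ (Fin n))) = 0 := by
    apply Measure.addHaar_submodule
    intro htop
    have h1 : (EuclideanSpace.single (0 : Fin n) (1 : ℝ) : E) ∈ LinearMap.ker lm :=
      htop ▸ Submodule.mem_top
    rw [LinearMap.mem_ker] at h1
    change (EuclideanSpace.single (0 : Fin n) (1 : ℝ) : E) 0 = 0 at h1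
    simp [hlm, LinearMap.coe_mk, AddHom.coe_mk, EuclideanSpace.single_apply] at h1
  have hset : {u : E | u 0 = 0} = ↑(LinearMap.ker lm) := by
    ext u
    simp [LinearMap.mem_ker, hlm, LinearMap.coe_mk, AddHom.coe_mk]
    exact Iff.rfl
  by_contra hle
  push_neg at hle
  have hzero : volume {u : E | u 0 ≠ 0} = 0 := le_zero_iff.mp hle
  have huniv : (volume : Measure E) Set.univ = 0 := by
    have hcover : (Set.univ : Set E) ⊆ {u : E | u 0 ≠ 0} ∪ {u : E | u 0 = 0} := by
      intro u _
      exact (ne_or_eq (u 0) 0).imp id id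
    refine le_antisymm ((measure_mono hcover).trans ?_) zero_le
    refine (measure_union_le _ _).trans ?_
    rw [hzero, hset, hker]
    simp
  exact (isOpen_univ.measure_ne_zero (volume : Measure E) ⟨0, trivial⟩) huniv

lemma rot [NeZero n] (hk : 0 < k) (x : E) :
    ∫ u : E, (∑ i, x i * u i) ^ (2 * k) * rexp (-‖u‖ ^ 2)
      = ‖x‖ ^ (2 * k) * myC n k := by
  by_cases hx : x = 0
  · subst hx
    have h2k : 2 * k ≠ 0 := by omega
    simp [zero_pow h2k]
  · set y : E := ‖x‖⁻¹ • x with hy_def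
    have hy : ‖y‖ = 1 := norm_smul_inv_norm hx
    set e0 : E := EuclideanSpace.single (0 : Fin n) (1 : ℝ) with he0_def
    have he0 : ‖e0‖ = 1 := sphere_unit n
    set R := Submodule.reflection (ℝ ∙ (e0 - y))ᗮ with hR_def
    have hRe0 : R e0 = y := Submodule.reflection_sub (by rw [he0, hy])
    have hMP : MeasurePreserving R volume volume := R.measurePreserving
    rw [← hMP.integral_comp (R.toHomeomorph.measurableEmbedding)
      (fun u => (∑ i, x i * u i) ^ (2 * k) * rexp (-‖u‖ ^ 2))]
    have hinner : ∀ v : E, (∑ i, x i * (R v) i) = ‖x‖ * v 0 := by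
      intro v
      have h1 : (∑ i, x i * (R v) i) = inner (𝕜 := ℝ) x (R v) := by
        rw [PiLp.inner_apply]
        simp [RCLike.inner_apply, starRingEnd_apply, star_trivial, mul_comm]
      have hx' : x = ‖x‖ • y := (smul_inv_smul₀ (norm_ne_zero_iff.mpr hx) x).symm
      rw [h1]
      calc inner (𝕜 := ℝ) x (R v) = inner (𝕜 := ℝ) (‖x‖ • y) (R v) := by rw [← hx']
        _ = ‖x‖ * inner (𝕜 := ℝ) y (R v) := real_inner_smul_left _ _ _
        _ = ‖x‖ * inner (𝕜 := ℝ) (R e0) (R v) := by rw [hRe0]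
        _ = ‖x‖ * inner (𝕜 := ℝ) e0 v := by rw [LinearIsometryEquiv.inner_map_map]
        _ = ‖x‖ * v 0 := by rw [EuclideanSpace.inner_single_left]; simp
    calc ∫ v : E, (∑ i, x i * (R v) i) ^ (2 * k) * rexp (-‖R v‖ ^ 2)
        = ∫ v : E, ‖x‖ ^ (2 * k) * ((v 0) ^ (2 * k) * rexp (-‖v‖ ^ 2)) := by
          apply integral_congr_ae
          apply Filter.Eventually.of_forall
          intro v
          show (∑ i, x i * (R v) i) ^ (2 * k) * rexp (-‖R v‖ ^ 2)
            = ‖x‖ ^ (2 * k) * ((v 0) ^ (2 * k) * rexp (-‖v‖ ^ 2))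
          rw [hinner v, LinearIsometryEquiv.norm_map, mul_pow, mul_assoc]
      _ = ‖x‖ ^ (2 * k) * myC n k := by rw [integral_const_mul]; rfl


/-! ### Pairing with the average -/

lemma pairing_with_J [NeZero n] (hk : 0 < k) (x : E) :
    ∑ m : ↥(myA n k), myPsi n k x m * (⨍ u, myPhi n k u ∂(myGamma n)) m
      = ((myGamma n Set.univ).toReal)⁻¹ * (‖x‖ ^ (2 * k) * myC n k) := by
  haveI : IsFiniteMeasure (myGamma n) := gamma_finite n
  rw [average_eq, measureReal_def]
  have hGm : ∀ m : ↥(myA n k), (∫ u, myPhi n k u ∂(myGamma n)) m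
      = ∫ u, myPhi n k u m ∂(myGamma n) := by
    intro m
    exact ((ContinuousLinearMap.proj (R := ℝ) (φ := fun _ : ↥(myA n k) => ℝ)
      m).integral_comp_comm (integrable_phi_vec n k)).symm
  have hstep : ∑ m : ↥(myA n k), myPsi n k x m *
      ((myGamma n Set.univ).toReal⁻¹ • ∫ u, myPhi n k u ∂myGamma n) m
      = (myGamma n Set.univ).toReal⁻¹ *
          ∑ m : ↥(myA n k), myPsi n k x m * ∫ u, myPhi n k u m ∂myGamma n := by
    rw [Finset.mul_sum]
    apply Finset.sum_congr rfl
    intro m _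
    rw [Pi.smul_apply, smul_eq_mul, hGm m]
    ring
  rw [hstep]
  congr 1
  have h1 : ∀ m : ↥(myA n k), myPsi n k x m * ∫ u, myPhi n k u m ∂myGamma n
      = ∫ u, myPsi n k x m * myPhi n k u m ∂myGamma n := fun m => (integral_const_mul _ _).symm
  simp_rw [h1]
  rw [← integral_finset_sum _ (fun m _ => (integrable_phi_gamma n k m).const_mul _)]
  have hkey : ∀ u : E, ∑ m : ↥(myA n k), myPsi n k x m * myPhi n k u m
      = (∑ i, x i * u i) ^ (2 * k) := fun u => (key_pairing n k x u).symm
  rw [integral_congr_ae (Filter.Eventually.of_forall fun u => hkey u)]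
  rw [← rot n k hk x]
  rw [myGamma, integral_withDensity_eq_integral_smul (meas_dens n)]
  apply integral_congr_ae
  apply Filter.Eventually.of_forall
  intro u
  show myDens n u • (∑ i, x i * u i) ^ (2 * k) = (∑ i, x i * u i) ^ (2 * k) * rexp (-‖u‖ ^ 2)
  rw [NNReal.smul_def, smul_eq_mul]
  simp only [myDens]
  rw [Real.coe_toNNReal _ (Real.exp_nonneg _), mul_comm]

/-! ### The finite positive representation -/

lemma main_rep [NeZero n] (hk : 0 < k) :
    ∃ (N : ℕ) (w : Fin N → ℝ) (v : Fin N → EuclideanSpace ℝ (Fin n)),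
      (∀ j, 0 ≤ w j) ∧ ∀ x : EuclideanSpace ℝ (Fin n),
        ∑ j, w j * (∑ i, x i * v j i) ^ (2 * k) = ‖x‖ ^ (2 * k) := by
  classical
  haveI : IsFiniteMeasure (myGamma n) := gamma_finite n
  haveI : NeZero (myGamma n) := ⟨gamma_ne_zero n⟩
  have hmem := (convex_myS n k).average_mem (closed_myS n k hk)
    (Filter.Eventually.of_forall (phi_mem_myS n k hk)) (integrable_phi_vec n k)
  rw [myS, Set.mem_setOf_eq] at hmem
  obtain ⟨t0, ht0, q, hq, hJq⟩ := hmem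
  rw [convexHull_eq] at hq
  obtain ⟨ι, t, w, z, hw0, hw1, hz, hcm⟩ := hq
  rw [Finset.centerMass_eq_of_sum_1 _ _ hw1] at hcm
  set v : ι → EuclideanSpace ℝ (Fin n) := fun i =>
    if h : ∃ u : EuclideanSpace ℝ (Fin n), ‖u‖ = 1 ∧ myPhi n k u = z i then h.choose else 0
      with hv
  have hvz : ∀ i ∈ t, myPhi n k (v i) = z i := by
    intro i hi
    obtain ⟨u, hu1, hu2⟩ := hz i hi
    have h : ∃ u : EuclideanSpace ℝ (Fin n), ‖u‖ = 1 ∧ myPhi n k u = z i := ⟨u, hu1, hu2⟩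
    simp only [hv, dif_pos h]
    exact h.choose_spec.2
  have hmasspos : 0 < (myGamma n Set.univ).toReal := ENNReal.toReal_pos
    (Measure.measure_univ_ne_zero.mpr (gamma_ne_zero n)) (measure_ne_top _ _)
  have hA0 : 0 < ((myGamma n Set.univ).toReal)⁻¹ * myC n k := by
    have h1 := myC_pos n k hk
    positivity
  have hkey : ∀ x : EuclideanSpace ℝ (Fin n),
      ∑ i ∈ t, (t0 * w i) * (∑ i', x i' * v i i') ^ (2 * k)
        = ((myGamma n Set.univ).toReal)⁻¹ * myC n k * ‖x‖ ^ (2 * k) := by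
    intro x
    have h1 := pairing_with_J n k hk x
    rw [hJq] at h1
    have hqm : ∀ m : ↥(myA n k), q m = ∑ i ∈ t, w i * myPhi n k (v i) m := by
      intro m
      rw [← hcm, Finset.sum_apply]
      apply Finset.sum_congr rfl
      intro i hi
      rw [Pi.smul_apply, smul_eq_mul, hvz i hi]
    have h2 : ∑ m : ↥(myA n k), myPsi n k x m * (t0 • q) m
        = ∑ i ∈ t, (t0 * w i) * (∑ i', x i' * v i i') ^ (2 * k) := by
      calc ∑ m : ↥(myA n k), myPsi n k x m * (t0 • q) m
          = ∑ m : ↥(myA n k), ∑ i ∈ t, (t0 * w i) * (myPsi n k x m * myPhi n k (v i) m) := by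
            apply Finset.sum_congr rfl
            intro m _
            rw [Pi.smul_apply, smul_eq_mul, hqm m, Finset.mul_sum, Finset.mul_sum]
            apply Finset.sum_congr rfl
            intro i _
            ring
        _ = ∑ i ∈ t, ∑ m : ↥(myA n k), (t0 * w i) * (myPsi n k x m * myPhi n k (v i) m) :=
            Finset.sum_comm
        _ = ∑ i ∈ t, (t0 * w i) * (∑ i', x i' * v i i') ^ (2 * k) := by
            apply Finset.sum_congr rfl
            intro i _
            rw [← Finset.mul_sum, ← key_pairing]
    rw [h2] at h1
    rw [h1]
    ring
  refine ⟨t.card, fun j => (t0 * w ((t.equivFin.symm j) : ι)) /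
      (((myGamma n Set.univ).toReal)⁻¹ * myC n k),
    fun j => v ((t.equivFin.symm j) : ι), fun j => ?_, fun x => ?_⟩
  · exact div_nonneg (mul_nonneg ht0 (hw0 _ (t.equivFin.symm j).2)) hA0.le
  · have hsum2 : ∑ j : Fin t.card,
        (t0 * w ((t.equivFin.symm j) : ι)) / (((myGamma n Set.univ).toReal)⁻¹ * myC n k)
          * (∑ i', x i' * v ((t.equivFin.symm j) : ι) i') ^ (2 * k)
        = ∑ i ∈ t, (t0 * w i) / (((myGamma n Set.univ).toReal)⁻¹ * myC n k)
          * (∑ i', x i' * v i i') ^ (2 * k) := by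
      exact (Equiv.sum_comp t.equivFin.symm (fun i : ↥t => (t0 * w (i : ι)) /
        (((myGamma n Set.univ).toReal)⁻¹ * myC n k)
          * (∑ i', x i' * v (i : ι) i') ^ (2 * k))).trans (Finset.sum_coe_sort t
            (fun i => (t0 * w i) / (((myGamma n Set.univ).toReal)⁻¹ * myC n k)
              * (∑ i', x i' * v i i') ^ (2 * k)))
    rw [hsum2]
    have hfac : ∑ i ∈ t, (t0 * w i) / (((myGamma n Set.univ).toReal)⁻¹ * myC n k)
          * (∑ i', x i' * v i i') ^ (2 * k)
        = (((myGamma n Set.univ).toReal)⁻¹ * myC n k)⁻¹ *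
          ∑ i ∈ t, (t0 * w i) * (∑ i', x i' * v i i') ^ (2 * k) := by
      rw [Finset.mul_sum]
      apply Finset.sum_congr rfl
      intro i _
      ring
    rw [hfac, hkey x]
    rw [inv_mul_cancel_left₀ hA0.ne']


end AuxHilbert

noncomputable def buildT (n N : ℕ) (w : Fin N → ℝ) (v : Fin N → EuclideanSpace ℝ (Fin n))
    (p : ℝ) : EuclideanSpace ℝ (Fin n) →ₗ[ℝ] (ℕ → ℝ) where
  toFun x := fun j => if h : j < N then (w ⟨j, h⟩) ^ (p⁻¹) * (∑ i, x i * v ⟨j, h⟩ i) else 0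
  map_add' x y := by
    funext j
    by_cases h : j < N
    · simp only [dif_pos h, PiLp.add_apply, Pi.add_apply, add_mul,
        Finset.sum_add_distrib, mul_add]
    · simp [dif_neg h]
  map_smul' c x := by
    funext j
    by_cases h : j < N
    · simp only [dif_pos h, PiLp.smul_apply, smul_eq_mul, RingHom.id_apply, Pi.smul_apply]
      have hms : ∑ i, (c * x i) * v ⟨j, h⟩ i = c * ∑ i, x i * v ⟨j, h⟩ i := by
        rw [Finset.mul_sum]
        apply Finset.sum_congr rfl
        intros
        ring
      rw [hms]
      ring
    · simp [dif_neg h]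

/-- `ℓ_2^n` (`n ≥ 2`) embeds linearly isometrically into `ℓ_p` whenever `p`
is a positive even integer. -/
theorem euclidean_embeds_lp_of_even
    (n : ℕ) (hn : 2 ≤ n) (p : ℝ) (hp : ∃ k : ℕ, 0 < k ∧ p = 2 * k) :
    ∃ T : EuclideanSpace ℝ (Fin n) →ₗ[ℝ] (ℕ → ℝ),
      ∀ x : EuclideanSpace ℝ (Fin n),
        Summable (fun j => |T x j| ^ p) ∧ ∑' j, |T x j| ^ p = ‖x‖ ^ p := by
  classical
  obtain ⟨k, hk, hpk⟩ := hp
  haveI : NeZero n := ⟨by omega⟩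
  obtain ⟨N, w, v, hw0, hsum⟩ := main_rep n k hk
  have hppos : 0 < p := by
    rw [hpk]
    positivity
  have hcast : p = ((2 * k : ℕ) : ℝ) := by
    rw [hpk]
    push_cast
    ring
  refine ⟨buildT n N w v p, ?_⟩
  intro x
  set f : ℕ → ℝ := fun j => |buildT n N w v p x j| ^ p with hf
  have hTapp : ∀ j, buildT n N w v p x j
      = if h : j < N then (w ⟨j, h⟩) ^ (p⁻¹) * (∑ i, x i * v ⟨j, h⟩ i) else 0 := fun j => rfl
  have hvan : ∀ j ∉ Finset.range N, f j = 0 := by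
    intro j hj
    rw [Finset.mem_range, not_lt] at hj
    simp only [hf, hTapp, dif_neg (not_lt.mpr hj), abs_zero]
    exact Real.zero_rpow hppos.ne'
  have hterm : ∀ j : Fin N, f (j : ℕ) = w j * (∑ i, x i * v j i) ^ (2 * k) := by
    intro j
    simp only [hf, hTapp, dif_pos j.2, Fin.eta]
    rw [abs_mul, Real.mul_rpow (abs_nonneg _) (abs_nonneg _)]
    have h1 : |w j ^ (p⁻¹)| ^ p = w j := by
      rw [abs_of_nonneg (Real.rpow_nonneg (hw0 j) _), ← Real.rpow_mul (hw0 j),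
        inv_mul_cancel₀ hppos.ne', Real.rpow_one]
    have h2 : |∑ i, x i * v j i| ^ p = (∑ i, x i * v j i) ^ (2 * k) := by
      rw [hcast, Real.rpow_natCast]
      exact Even.pow_abs (even_two_mul k) _
    rw [h1, h2]
  have hsummable : Summable f := summable_of_ne_finset_zero hvan
  have htsum : ∑' j, f j = ‖x‖ ^ p := by
    rw [tsum_eq_sum hvan, ← Fin.sum_univ_eq_sum_range (fun j => f j) N]
    calc ∑ j : Fin N, f (j : ℕ) = ∑ j : Fin N, w j * (∑ i, x i * v j i) ^ (2 * k) :=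
          Finset.sum_congr rfl fun j _ => hterm j
      _ = ‖x‖ ^ (2 * k) := hsum x
      _ = ‖x‖ ^ p := by rw [hcast, Real.rpow_natCast]
  exact ⟨hsummable, htsum⟩
end

section
/- Let ‖·‖ be a norm on ℝ² such that the function G(θ) = ‖(cos θ, sin θ)‖ is of class C² on [0, 2π]. Then (ℝ², ‖·‖) does not embed linearly isometrically into ℓ_1. -/
open scoped BigOperators
open Real

private lemma abs_corner_key (a b θ h : ℝ) (hch : 0 ≤ Real.cos h) :
    2 * Real.cos h * |Real.cos θ * a + Real.sin θ * b| ≤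
      |Real.cos (θ + h) * a + Real.sin (θ + h) * b| +
        |Real.cos (θ - h) * a + Real.sin (θ - h) * b| := by
  have e : Real.cos (θ + h) * a + Real.sin (θ + h) * b +
      (Real.cos (θ - h) * a + Real.sin (θ - h) * b) =
      2 * Real.cos h * (Real.cos θ * a + Real.sin θ * b) := by
    rw [Real.cos_add, Real.sin_add, Real.cos_sub, Real.sin_sub]; ring
  calc 2 * Real.cos h * |Real.cos θ * a + Real.sin θ * b|
      = |2 * Real.cos h * (Real.cos θ * a + Real.sin θ * b)| := by
        rw [abs_mul, abs_of_nonneg (by linarith : (0:ℝ) ≤ 2 * Real.cos h)]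
    _ = |Real.cos (θ + h) * a + Real.sin (θ + h) * b +
          (Real.cos (θ - h) * a + Real.sin (θ - h) * b)| := by rw [e]
    _ ≤ _ := abs_add_le _ _

/-- If `‖·‖` is a norm on `ℝ²` such that `G(θ) = ‖(cos θ, sin θ)‖` is `C²`,
then `(ℝ², ‖·‖)` does not embed linearly isometrically into `ℓ_1`. -/
theorem smooth_two_dim_norm_not_embeds_l1
    (N : ℝ × ℝ → ℝ)
    (hN0 : ∀ x, N x = 0 ↔ x = 0)
    (hNsmul : ∀ (c : ℝ) x, N (c • x) = |c| * N x)
    (hNtri : ∀ x y, N (x + y) ≤ N x + N y)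
    (hG : ContDiff ℝ 2 (fun θ : ℝ => N (Real.cos θ, Real.sin θ))) :
    ¬ ∃ T : (ℝ × ℝ) →ₗ[ℝ] (ℕ → ℝ),
      ∀ x : ℝ × ℝ,
        Summable (fun j => |T x j|) ∧ ∑' j, |T x j| = N x := by
  rintro ⟨T, hT⟩
  set a : ℕ → ℝ := fun i => T (1, 0) i with ha
  set b : ℕ → ℝ := fun i => T (0, 1) i with hb
  -- T x i = x.1 * a i + x.2 * b i
  have hTx : ∀ (x : ℝ × ℝ) (i : ℕ), T x i = x.1 * a i + x.2 * b i := by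
    intro x i
    have hx : x = x.1 • ((1 : ℝ), (0 : ℝ)) + x.2 • ((0 : ℝ), (1 : ℝ)) := by
      ext <;> simp
    rw [ha, hb]
    conv_lhs => rw [hx]
    rw [map_add, map_smul, map_smul]
    simp [smul_eq_mul]
  -- find an index j where (a j, b j) ≠ 0
  have hN1 : N (1, 0) ≠ 0 := by
    intro h0
    have := (hN0 (1, 0)).1 h0
    simp [Prod.ext_iff] at this
  obtain ⟨j, hj⟩ : ∃ i, a i ≠ 0 := by
    by_contra hall
    push_neg at hall
    apply hN1
    rw [← (hT (1, 0)).2]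
    have : (fun i => |T (1, 0) i|) = fun _ => (0 : ℝ) := by
      funext i; simp [← ha, hall i]
    rw [this, tsum_zero]
  set r : ℝ := Real.sqrt (a j ^ 2 + b j ^ 2) with hr
  have hr2 : r ^ 2 = a j ^ 2 + b j ^ 2 := Real.sq_sqrt (by positivity)
  have hrpos : 0 < r := by
    rw [hr]
    apply Real.sqrt_pos.2
    have h1 : 0 < a j ^ 2 := by positivity
    nlinarith [sq_nonneg (b j)]
  -- choose θ₀ with cos θ₀ = b j / r, sin θ₀ = - a j / r
  set z : ℂ := Complex.mk (b j / r) (-(a j) / r) with hz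
  have hzabs : ‖z‖ = 1 := by
    rw [Complex.norm_def, Complex.normSq_mk]
    have : b j / r * (b j / r) + -a j / r * (-a j / r) = (a j ^ 2 + b j ^ 2) / r ^ 2 := by
      ring
    rw [this, ← hr2, div_self (by positivity), Real.sqrt_one]
  have hzne : z ≠ 0 := by
    intro h0
    rw [h0] at hzabs
    simp at hzabs
  set θ₀ : ℝ := z.arg with hθ₀
  have hc0 : Real.cos θ₀ = b j / r := by
    rw [hθ₀, Complex.cos_arg hzne, hzabs, div_one]
  have hs0 : Real.sin θ₀ = -(a j) / r := by
    rw [hθ₀, Complex.sin_arg, hzabs, div_one]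
  have ha' : a j = -(r * Real.sin θ₀) := by
    rw [hs0]; field_simp
  have hb' : b j = r * Real.cos θ₀ := by
    rw [hc0]; field_simp
  have hzero : Real.cos θ₀ * a j + Real.sin θ₀ * b j = 0 := by
    rw [ha', hb']; ring
  have hcj : ∀ h : ℝ, Real.cos (θ₀ + h) * a j + Real.sin (θ₀ + h) * b j = r * Real.sin h := by
    intro h
    rw [Real.cos_add, Real.sin_add, ha', hb']
    linear_combination (r * Real.sin h) * (Real.sin_sq_add_cos_sq θ₀)
  have hcj' : ∀ h : ℝ, Real.cos (θ₀ - h) * a j + Real.sin (θ₀ - h) * b j = -(r * Real.sin h) := by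
    intro h
    rw [Real.cos_sub, Real.sin_sub, ha', hb']
    linear_combination (-(r * Real.sin h)) * (Real.sin_sq_add_cos_sq θ₀)
  -- the norm of the point on the circle
  set G : ℝ → ℝ := fun θ => N (Real.cos θ, Real.sin θ) with hGdef
  have hGt : ∀ θ : ℝ, G θ = ∑' i, |Real.cos θ * a i + Real.sin θ * b i| := by
    intro θ
    rw [hGdef]
    simp only
    rw [← (hT (Real.cos θ, Real.sin θ)).2]
    congr 1
    funext i
    rw [hTx]
  have hGsum : ∀ θ : ℝ, Summable (fun i => |Real.cos θ * a i + Real.sin θ * b i|) := by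
    intro θ
    have := (hT (Real.cos θ, Real.sin θ)).1
    convert this using 2 with i
    rw [hTx]
  -- Key inequality: for h ∈ (0, π/2], G(θ₀+h) + G(θ₀-h) ≥ 2 cos h G θ₀ + 2 r sin h
  have key : ∀ h : ℝ, 0 ≤ Real.cos h → 0 ≤ Real.sin h →
      2 * Real.cos h * G θ₀ + 2 * r * Real.sin h ≤ G (θ₀ + h) + G (θ₀ - h) := by
    intro h hch hsh
    rw [hGt, hGt, hGt]
    rw [← Summable.tsum_add (hGsum _) (hGsum _)]
    rw [← tsum_mul_left]
    have hind : (2 * r * Real.sin h : ℝ) =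
        ∑' i : ℕ, (if i = j then 2 * r * Real.sin h else 0) := (tsum_ite_eq j (fun _ => 2 * r * Real.sin h)).symm
    rw [hind, ← Summable.tsum_add ((hGsum θ₀).mul_left _) (hasSum_ite_eq j _).summable]
    apply Summable.tsum_le_tsum _ _ ((hGsum _).add (hGsum _))
    · intro i
      by_cases hij : i = j
      · subst hij
        rw [if_pos rfl, hzero, abs_zero, mul_zero, zero_add, hcj, hcj', abs_neg,
          abs_of_nonneg (mul_nonneg hrpos.le hsh)]
        linarith
      · simp only [if_neg hij, add_zero]
        exact abs_corner_key (a i) (b i) θ₀ h hch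
    · exact ((hGsum θ₀).mul_left _).add (hasSum_ite_eq j _).summable
  -- G is differentiable
  have hGdiff : Differentiable ℝ G := hG.differentiable (by norm_num)
  set d : ℝ := deriv G θ₀ with hd
  have hD1 : HasDerivAt (fun h : ℝ => G (θ₀ + h)) d 0 := by
    have : HasDerivAt G d (θ₀ + 0) := by
      rw [add_zero]; exact (hGdiff θ₀).hasDerivAt
    simpa [Function.comp_def] using this.comp 0 ((hasDerivAt_id (0:ℝ)).const_add θ₀)
  have hD2 : HasDerivAt (fun h : ℝ => G (θ₀ - h)) (-d) 0 := by
    have : HasDerivAt G d (θ₀ - 0) := by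
      rw [sub_zero]; exact (hGdiff θ₀).hasDerivAt
    have h2 : HasDerivAt (fun h : ℝ => θ₀ - h) (-1) 0 := by
      simpa using ((hasDerivAt_id (0:ℝ)).const_sub θ₀)
    simpa [Function.comp_def] using this.comp 0 h2
  have hD3 : HasDerivAt (fun h : ℝ => 2 * Real.cos h * G θ₀) 0 0 := by
    have := ((Real.hasDerivAt_cos 0).const_mul 2).mul_const (G θ₀)
    simpa using this
  set D : ℝ → ℝ := fun h => G (θ₀ + h) + G (θ₀ - h) - 2 * Real.cos h * G θ₀ with hDdef
  have hDD : HasDerivAt D 0 0 := by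
    have := (hD1.add hD2).sub hD3
    simp only [add_neg_cancel, sub_zero] at this
    exact this
  have hD0 : D 0 = 0 := by
    simp only [hDdef, add_zero, sub_zero, Real.cos_zero]
    ring
  -- slope of D at 0 tends to 0 along 𝓝[>] 0
  have hslopeD : Filter.Tendsto (slope D 0) (nhdsWithin 0 (Set.Ioi 0)) (nhds 0) := by
    apply (hasDerivAt_iff_tendsto_slope.1 hDD).mono_left
    apply nhdsWithin_mono
    intro x hx
    exact ne_of_gt hx
  have hslopeS : Filter.Tendsto (fun h => 2 * r * slope Real.sin 0 h)
      (nhdsWithin 0 (Set.Ioi 0)) (nhds (2 * r)) := by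
    have h1 : Filter.Tendsto (slope Real.sin 0) (nhdsWithin 0 (Set.Ioi 0)) (nhds 1) := by
      have := hasDerivAt_iff_tendsto_slope.1 (Real.hasDerivAt_sin 0)
      rw [Real.cos_zero] at this
      apply this.mono_left
      apply nhdsWithin_mono
      intro x hx
      exact ne_of_gt hx
    have := h1.const_mul (2 * r)
    simpa using this
  have hle : 2 * r ≤ 0 := by
    apply le_of_tendsto_of_tendsto hslopeS hslopeD
    filter_upwards [Ioc_mem_nhdsGT_of_mem (Set.left_mem_Ico.2 (by positivity : (0:ℝ) < π/2))]
      with h hh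
    obtain ⟨hh0, hh2⟩ := hh
    have hch : 0 ≤ Real.cos h := Real.cos_nonneg_of_mem_Icc ⟨by linarith, hh2⟩
    have hsh : 0 ≤ Real.sin h := Real.sin_nonneg_of_nonneg_of_le_pi hh0.le
      (by linarith [Real.pi_gt_three])
    have hk := key h hch hsh
    rw [slope_def_field, slope_def_field, hD0, Real.sin_zero, sub_zero, sub_zero, sub_zero]
    rw [← mul_div_assoc]
    have h2 : 2 * r * Real.sin h ≤ D h := by
      show 2 * r * Real.sin h ≤ G (θ₀ + h) + G (θ₀ - h) - 2 * Real.cos h * G θ₀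
      linarith
    gcongr
  linarith
end

section
/- Let ‖·‖ be a norm on ℝ² and set G(θ) = ‖(cos θ, sin θ)‖. If G is of class C², then for every φ, G(φ) = (1/4) ∫_0^{2π} |cos(φ − θ)| [G(θ − π/2) + G''(θ − π/2)] dθ. -/
open scoped BigOperators
open Real

/-- If `‖·‖` is a norm on `ℝ²` and `G(θ) = ‖(cos θ, sin θ)‖` is `C²`, then for
every `φ`, `G(φ) = (1/4) ∫_0^{2π} |cos(φ-θ)| (G(θ-π/2) + G''(θ-π/2)) dθ`. -/
theorem levy_one_representation_formula
    (N : ℝ × ℝ → ℝ)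
    (hN0 : ∀ x, N x = 0 ↔ x = 0)
    (hNsmul : ∀ (c : ℝ) x, N (c • x) = |c| * N x)
    (hNtri : ∀ x y, N (x + y) ≤ N x + N y)
    (G : ℝ → ℝ) (hGdef : ∀ θ, G θ = N (Real.cos θ, Real.sin θ))
    (hG : ContDiff ℝ 2 G) :
    ∀ φ : ℝ, G φ = (1 / 4) *
      ∫ θ in (0 : ℝ)..(2 * π),
        |Real.cos (φ - θ)| * (G (θ - π / 2) + deriv (deriv G) (θ - π / 2)) := by
  intro φ
  -- differentiability facts
  have hstep : Differentiable ℝ G ∧ ContDiff ℝ 1 (deriv G) := by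
    have h := (contDiff_succ_iff_deriv (n := 1)).mp (by exact_mod_cast hG)
    exact ⟨h.1, h.2.2⟩
  have hG1 : Differentiable ℝ G := hstep.1
  have hstep2 := contDiff_one_iff_deriv.mp hstep.2
  have hG'diff : Differentiable ℝ (deriv G) := hstep2.1
  have hG''cont : Continuous (deriv (deriv G)) := hstep2.2
  -- periodicity of G with period π
  have hper : Function.Periodic G π := by
    intro x
    rw [hGdef, hGdef]
    have hx : (Real.cos (x + π), Real.sin (x + π)) = (-1 : ℝ) • (Real.cos x, Real.sin x) := by
      simp [Real.cos_add_pi, Real.sin_add_pi, Prod.smul_mk]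
    rw [hx, hNsmul]
    norm_num
  have hfun : (fun x => G (x + π)) = G := funext hper
  have hper' : Function.Periodic (deriv G) π := fun x => by
    rw [← deriv_comp_add_const, hfun]
  have hfun' : (fun x => deriv G (x + π)) = deriv G := funext hper'
  have hper'' : Function.Periodic (deriv (deriv G)) π := fun x => by
    rw [← deriv_comp_add_const, hfun']
  -- H and K
  set H : ℝ → ℝ := fun u => G u + deriv (deriv G) u with hH
  set K : ℝ → ℝ := fun u => |Real.sin (u - φ)| * H u with hK
  have hHper : Function.Periodic H π := fun x => by
    simp only [hH, hper x, hper'' x]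
  have hKper : Function.Periodic K π := fun x => by
    simp only [hK]
    rw [hHper x]
    congr 1
    rw [show x + π - φ = (x - φ) + π by ring, Real.sin_add_pi, abs_neg]
  have hHcont : Continuous H := hG.continuous.add hG''cont
  have hsincont : Continuous fun u : ℝ => Real.sin (u - φ) :=
    Real.continuous_sin.comp (continuous_id.sub continuous_const)
  have hKcont : Continuous K := hsincont.abs.mul hHcont
  have hKint : ∀ t₁ t₂ : ℝ, IntervalIntegrable K MeasureTheory.MeasureSpace.volume t₁ t₂ :=
    fun t₁ t₂ => hKcont.intervalIntegrable t₁ t₂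
  -- rewrite integrand as K (θ - π/2)
  have hrew : ∀ θ : ℝ,
      |Real.cos (φ - θ)| * (G (θ - π / 2) + deriv (deriv G) (θ - π / 2)) = K (θ - π / 2) := by
    intro θ
    simp only [hK, hH]
    congr 1
    rw [show θ - π / 2 - φ = (θ - φ) - π / 2 by ring, Real.sin_sub_pi_div_two, abs_neg,
      show φ - θ = -(θ - φ) by ring, Real.cos_neg]
  -- the fundamental theorem of calculus computation
  have hFder : ∀ u : ℝ, HasDerivAt
      (fun u => Real.sin (u - φ) * deriv G u - Real.cos (u - φ) * G u)
      (Real.sin (u - φ) * H u) u := by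
    intro u
    have hs : HasDerivAt (fun u => Real.sin (u - φ)) (Real.cos (u - φ)) u := by
      simpa [Function.comp_def] using (Real.hasDerivAt_sin (u - φ)).comp u ((hasDerivAt_id u).sub_const φ)
    have hc : HasDerivAt (fun u => Real.cos (u - φ)) (-Real.sin (u - φ)) u := by
      simpa [Function.comp_def] using (Real.hasDerivAt_cos (u - φ)).comp u ((hasDerivAt_id u).sub_const φ)
    have h1 := (hs.mul (hG'diff u).hasDerivAt).sub (hc.mul (hG1 u).hasDerivAt)
    convert h1 using 1
    · rfl
    · rfl
    · rfl
    simp only [hH]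
    ring
  have hDint : (∫ u in φ..(φ + π), Real.sin (u - φ) * H u) = G φ + G (φ + π) := by
    rw [intervalIntegral.integral_eq_sub_of_hasDerivAt (fun u _ => hFder u)
      ((hsincont.mul hHcont).intervalIntegrable _ _)]
    simp [Real.sin_pi, Real.cos_pi]
    ring
  -- on [φ, φ+π] the abs goes away
  have hKeq : (∫ u in φ..(φ + π), K u) = ∫ u in φ..(φ + π), Real.sin (u - φ) * H u := by
    apply intervalIntegral.integral_congr
    intro u hu
    rw [Set.uIcc_of_le (by linarith [Real.pi_pos])] at hu
    simp only [hK]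
    congr 1
    exact abs_of_nonneg (Real.sin_nonneg_of_nonneg_of_le_pi
      (by linarith [hu.1]) (by linarith [hu.2]))
  -- periodicity reductions
  have h2 : (∫ u in (-(π / 2))..(-(π / 2) + (2 : ℤ) • π), K u)
      = (2 : ℤ) • ∫ u in (-(π / 2))..(-(π / 2) + π), K u :=
    hKper.intervalIntegral_add_zsmul_eq 2 _ hKint
  have h3 : (∫ u in (-(π / 2))..(-(π / 2) + π), K u) = ∫ u in φ..(φ + π), K u :=
    hKper.intervalIntegral_add_eq _ _
  -- assemble
  have hmain : (∫ θ in (0 : ℝ)..(2 * π),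
      |Real.cos (φ - θ)| * (G (θ - π / 2) + deriv (deriv G) (θ - π / 2))) = 4 * G φ := by
    calc (∫ θ in (0 : ℝ)..(2 * π),
        |Real.cos (φ - θ)| * (G (θ - π / 2) + deriv (deriv G) (θ - π / 2)))
        = ∫ θ in (0 : ℝ)..(2 * π), K (θ - π / 2) := by
          apply intervalIntegral.integral_congr
          intro θ _
          exact hrew θ
      _ = ∫ u in (0 - π / 2)..(2 * π - π / 2), K u :=
          intervalIntegral.integral_comp_sub_right K (π / 2)
      _ = ∫ u in (-(π / 2))..(-(π / 2) + (2 : ℤ) • π), K u := by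
          congr 1 <;> (try rw [zsmul_eq_mul]) <;> push_cast <;> ring
      _ = (2 : ℤ) • ∫ u in (-(π / 2))..(-(π / 2) + π), K u := h2
      _ = (2 : ℤ) • ∫ u in φ..(φ + π), K u := by rw [h3]
      _ = (2 : ℤ) • (G φ + G (φ + π)) := by rw [hKeq, hDint]
      _ = 4 * G φ := by rw [hper φ, zsmul_eq_mul]; push_cast; ring
  rw [hmain]
  ring
end

section
/- Fix 1 ≤ p < q < 2 and n ≥ 2. The norm of ℓ_q^n admits the integral representation ‖x‖_q^p = c · ∫_{ℝⁿ} |⟨x, ξ⟩|^p dμ_q(ξ) for all x ∈ ℝⁿ, where μ_q is the standard n-dimensional symmetric q-stable measure (whose density is the Fourier transform of exp(−‖x‖_q^q)) and c⁻¹ = ∫_ℝ |t|^p dν_q(t) with ν_q the standard one-dimensional symmetric q-stable measure; in particular, ∫_ℝ |t|^p dν_q(t) < ∞. -/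
open scoped BigOperators
open Real MeasureTheory Complex
open Set

lemma scaleL (f : ℝ → ENNReal) (hf : Measurable f) {c : ℝ} (hc : 0 < c) :
    ∫⁻ t in Ioi (0:ℝ), f (c * t) = ENNReal.ofReal c⁻¹ * ∫⁻ t in Ioi (0:ℝ), f t := by
  have hmap := Real.map_volume_mul_left (ne_of_gt hc)
  have hpre : (fun t => c * t) ⁻¹' (Ioi (0:ℝ)) = Ioi 0 := by
    ext t; simp [Set.mem_preimage, mul_pos_iff_of_pos_left, hc]
  calc ∫⁻ t in Ioi (0:ℝ), f (c * t)
      = ∫⁻ t in (fun t => c * t) ⁻¹' (Ioi (0:ℝ)), f (c * t) := by rw [hpre]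
    _ = ∫⁻ t in Ioi (0:ℝ), f t ∂(Measure.map (fun t => c * t) volume) :=
        (setLIntegral_map measurableSet_Ioi hf (measurable_const_mul c)).symm
    _ = ENNReal.ofReal c⁻¹ * ∫⁻ t in Ioi (0:ℝ), f t := by
        rw [hmap, abs_of_pos (inv_pos.mpr hc), Measure.restrict_smul, lintegral_smul_measure, smul_eq_mul]

lemma piece1 {r : ℝ} (hr : -1 < r) : ∫⁻ t in Ioc (0:ℝ) 1, ENNReal.ofReal (t ^ r) < ⊤ := by
  have hint : IntegrableOn (fun t : ℝ => t ^ r) (Ioc 0 1) := by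
    have := intervalIntegral.intervalIntegrable_rpow' (a := 0) (b := 1) hr
    rwa [intervalIntegrable_iff_integrableOn_Ioc_of_le zero_le_one] at this
  calc ∫⁻ t in Ioc (0:ℝ) 1, ENNReal.ofReal (t ^ r)
      ≤ ∫⁻ t in Ioc (0:ℝ) 1, ‖(t:ℝ) ^ r‖ₑ := lintegral_ofReal_le_lintegral_enorm _
    _ < ⊤ := hint.2

lemma piece2 {s : ℝ} (hs : s < -1) : ∫⁻ t in Ioi (1:ℝ), ENNReal.ofReal (t ^ s) < ⊤ := by
  have hint : IntegrableOn (fun t : ℝ => t ^ s) (Ioi 1) :=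
    integrableOn_Ioi_rpow_of_lt hs one_pos
  calc ∫⁻ t in Ioi (1:ℝ), ENNReal.ofReal (t ^ s)
      ≤ ∫⁻ t in Ioi (1:ℝ), ‖(t:ℝ) ^ s‖ₑ := lintegral_ofReal_le_lintegral_enorm _
    _ < ⊤ := hint.2

lemma finite_of_bounds {g : ℝ → ℝ} {C₁ C₂ r s : ℝ} (hC₁ : 0 ≤ C₁) (hC₂ : 0 ≤ C₂)
    (hr : -1 < r) (hs : s < -1)
    (h1 : ∀ t ∈ Ioc (0:ℝ) 1, g t ≤ C₁ * t ^ r) (h2 : ∀ t ∈ Ioi (1:ℝ), g t ≤ C₂ * t ^ s) :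
    ∫⁻ t in Ioi (0:ℝ), ENNReal.ofReal (g t) < ⊤ := by
  rw [← Ioc_union_Ioi_eq_Ioi (zero_le_one (α := ℝ)),
    lintegral_union measurableSet_Ioi Ioc_disjoint_Ioi_same]
  have e1 : ∫⁻ t in Ioc (0:ℝ) 1, ENNReal.ofReal (g t) < ⊤ := by
    calc ∫⁻ t in Ioc (0:ℝ) 1, ENNReal.ofReal (g t)
        ≤ ∫⁻ t in Ioc (0:ℝ) 1, ENNReal.ofReal C₁ * ENNReal.ofReal (t ^ r) := by
          refine setLIntegral_mono' measurableSet_Ioc fun t ht => ?_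
          rw [← ENNReal.ofReal_mul hC₁]
          exact ENNReal.ofReal_le_ofReal (h1 t ht)
      _ = ENNReal.ofReal C₁ * ∫⁻ t in Ioc (0:ℝ) 1, ENNReal.ofReal (t ^ r) :=
          lintegral_const_mul' _ _ ENNReal.ofReal_ne_top
      _ < ⊤ := ENNReal.mul_lt_top ENNReal.ofReal_lt_top (piece1 hr)
  have e2 : ∫⁻ t in Ioi (1:ℝ), ENNReal.ofReal (g t) < ⊤ := by
    calc ∫⁻ t in Ioi (1:ℝ), ENNReal.ofReal (g t)
        ≤ ∫⁻ t in Ioi (1:ℝ), ENNReal.ofReal C₂ * ENNReal.ofReal (t ^ s) := by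
          refine setLIntegral_mono' measurableSet_Ioi fun t ht => ?_
          rw [← ENNReal.ofReal_mul hC₂]
          exact ENNReal.ofReal_le_ofReal (h2 t ht)
      _ = ENNReal.ofReal C₂ * ∫⁻ t in Ioi (1:ℝ), ENNReal.ofReal (t ^ s) :=
          lintegral_const_mul' _ _ ENNReal.ofReal_ne_top
      _ < ⊤ := ENNReal.mul_lt_top ENNReal.ofReal_lt_top (piece2 hs)
  exact ENNReal.add_lt_top.mpr ⟨e1, e2⟩

lemma pos_of_lower {g : ℝ → ℝ} {c : ℝ} (hc : 0 < c) (h : ∀ t ∈ Ioo (1:ℝ) 2, c ≤ g t) :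
    0 < ∫⁻ t in Ioi (0:ℝ), ENNReal.ofReal (g t) := by
  have step : ENNReal.ofReal c ≤ ∫⁻ t in Ioi (0:ℝ), ENNReal.ofReal (g t) := by
    calc ENNReal.ofReal c = ENNReal.ofReal c * volume (Ioo (1:ℝ) 2) := by
          rw [Real.volume_Ioo]; norm_num
      _ = ∫⁻ _ in Ioo (1:ℝ) 2, ENNReal.ofReal c := (setLIntegral_const _ _).symm
      _ ≤ ∫⁻ t in Ioo (1:ℝ) 2, ENNReal.ofReal (g t) :=
          setLIntegral_mono' measurableSet_Ioo fun t ht =>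
            ENNReal.ofReal_le_ofReal (h t ht)
      _ ≤ ∫⁻ t in Ioi (0:ℝ), ENNReal.ofReal (g t) :=
          lintegral_mono_set (fun t ht => lt_trans one_pos ht.1)
  exact lt_of_lt_of_le (by simpa using ENNReal.ofReal_pos.mpr hc) step

lemma one_sub_cos_le_sq (x : ℝ) : 1 - Real.cos x ≤ x ^ 2 := by
  have h1 : Real.sin (x/2) ^ 2 ≤ (x/2) ^ 2 := Real.sin_sq_le_sq
  have h2 : Real.cos (2 * (x/2)) = Real.cos (x/2) ^ 2 - Real.sin (x/2) ^ 2 :=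
    Real.cos_two_mul' _
  have h3 : Real.sin (x/2) ^ 2 + Real.cos (x/2) ^ 2 = 1 := Real.sin_sq_add_cos_sq _
  have hx : (2 : ℝ) * (x/2) = x := by ring
  rw [hx] at h2
  nlinarith

noncomputable def K0 (p : ℝ) : ENNReal :=
  ∫⁻ t in Ioi (0:ℝ), ENNReal.ofReal ((1 - Real.cos t) / t ^ (1 + p))

noncomputable def J1 (p q : ℝ) : ENNReal :=
  ∫⁻ t in Ioi (0:ℝ), ENNReal.ofReal ((1 - Real.exp (-(t ^ q))) / t ^ (1 + p))

lemma K0_lt_top {p : ℝ} (hp1 : 1 ≤ p) (hp2 : p < 2) : K0 p < ⊤ := by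
  refine finite_of_bounds (C₁ := 1) (C₂ := 2) zero_le_one (by norm_num)
    (r := 1 - p) (by linarith) (s := -(1+p)) (by linarith) ?_ ?_
  · intro t ht
    have ht0 : 0 < t := ht.1
    have hnum : 1 - Real.cos t ≤ t ^ ((2:ℝ)) := by
      rw [Real.rpow_two]; exact one_sub_cos_le_sq t
    have hden : (0:ℝ) < t ^ (1 + p) := Real.rpow_pos_of_pos ht0 _
    have : (1 - Real.cos t) / t ^ (1 + p) ≤ t ^ ((2:ℝ)) / t ^ (1 + p) := by
      gcongr
    rw [one_mul]
    refine this.trans (le_of_eq ?_)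
    rw [← Real.rpow_sub ht0]; ring_nf
  · intro t ht
    have ht0 : (0:ℝ) < t := lt_trans one_pos ht
    have hnum : 1 - Real.cos t ≤ 2 := by nlinarith [Real.neg_one_le_cos t]
    have hden : (0:ℝ) < t ^ (1 + p) := Real.rpow_pos_of_pos ht0 _
    have : (1 - Real.cos t) / t ^ (1 + p) ≤ 2 / t ^ (1 + p) := by gcongr
    refine this.trans (le_of_eq ?_)
    rw [Real.rpow_neg ht0.le, div_eq_mul_inv]

lemma J1_lt_top {p q : ℝ} (hp1 : 1 ≤ p) (hpq : p < q) : J1 p q < ⊤ := by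
  refine finite_of_bounds (C₁ := 1) (C₂ := 1) zero_le_one zero_le_one
    (r := q - 1 - p) (by linarith) (s := -(1+p)) (by linarith) ?_ ?_
  · intro t ht
    have ht0 : 0 < t := ht.1
    have hnum : 1 - Real.exp (-(t ^ q)) ≤ t ^ q := by
      have := Real.one_sub_le_exp_neg (t ^ q)
      linarith
    have hden : (0:ℝ) < t ^ (1 + p) := Real.rpow_pos_of_pos ht0 _
    have : (1 - Real.exp (-(t ^ q))) / t ^ (1 + p) ≤ t ^ q / t ^ (1 + p) := by gcongr
    rw [one_mul]
    refine this.trans (le_of_eq ?_)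
    rw [← Real.rpow_sub ht0]; ring_nf
  · intro t ht
    have ht0 : (0:ℝ) < t := lt_trans one_pos ht
    have hnum : 1 - Real.exp (-(t ^ q)) ≤ 1 := by
      have := Real.exp_pos (-(t ^ q)); linarith
    have hden : (0:ℝ) < t ^ (1 + p) := Real.rpow_pos_of_pos ht0 _
    have : (1 - Real.exp (-(t ^ q))) / t ^ (1 + p) ≤ 1 / t ^ (1 + p) := by gcongr
    refine this.trans (le_of_eq ?_)
    rw [Real.rpow_neg ht0.le, one_div, one_mul]

lemma K0_pos {p : ℝ} (hp1 : 1 ≤ p) : 0 < K0 p := by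
  have hcos1 : Real.cos 1 < 1 := by
    have := Real.cos_lt_cos_of_nonneg_of_le_pi le_rfl
      (by linarith [Real.pi_gt_three]) one_pos
    simpa using this
  refine pos_of_lower (c := (1 - Real.cos 1) / 2 ^ (1 + p))
    (div_pos (by linarith) (Real.rpow_pos_of_pos two_pos _)) ?_
  intro t ht
  have ht1 : (1:ℝ) ≤ t := ht.1.le
  have ht0 : (0:ℝ) < t := lt_of_lt_of_le one_pos ht1
  have hcost : Real.cos t ≤ Real.cos 1 := by
    rcases le_total t 1 with h | h
    · have : t = 1 := le_antisymm h ht1; rw [this]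
    · exact Real.cos_le_cos_of_nonneg_of_le_pi zero_le_one
        (ht.2.le.trans (by linarith [Real.pi_gt_three])) h
  have hden : t ^ (1 + p) ≤ 2 ^ (1 + p) :=
    Real.rpow_le_rpow ht0.le ht.2.le (by linarith)
  have hdenpos : (0:ℝ) < t ^ (1 + p) := Real.rpow_pos_of_pos ht0 _
  exact div_le_div₀ (by linarith) (by linarith) hdenpos hden


lemma J1_pos {p q : ℝ} (hp1 : 1 ≤ p) (hq0 : 0 ≤ q) : 0 < J1 p q := by
  have hexp : Real.exp (-1) < 1 := by
    rw [show (1:ℝ) = Real.exp 0 by simp]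
    exact Real.exp_lt_exp.mpr (by norm_num)
  refine pos_of_lower (c := (1 - Real.exp (-1)) / 2 ^ (1 + p))
    (div_pos (by linarith) (Real.rpow_pos_of_pos two_pos _)) ?_
  intro t ht
  have ht1 : (1:ℝ) ≤ t := ht.1.le
  have ht0 : (0:ℝ) < t := lt_of_lt_of_le one_pos ht1
  have htq : (1:ℝ) ≤ t ^ q := Real.one_le_rpow ht1 hq0
  have hnum : Real.exp (-(t ^ q)) ≤ Real.exp (-1) :=
    Real.exp_le_exp.mpr (by linarith)
  have hden : t ^ (1 + p) ≤ 2 ^ (1 + p) :=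
    Real.rpow_le_rpow ht0.le ht.2.le (by linarith)
  have hdenpos : (0:ℝ) < t ^ (1 + p) := Real.rpow_pos_of_pos ht0 _
  exact div_le_div₀ (by linarith) (by linarith) hdenpos hden


lemma scale_kernel {h : ℝ → ℝ} (hh : Measurable h) {p c : ℝ} (hp : 0 ≤ 1 + p) (hc : 0 < c) :
    ∫⁻ t in Ioi (0:ℝ), ENNReal.ofReal (h (c * t) / t ^ (1 + p)) =
      ENNReal.ofReal (c ^ p) * ∫⁻ t in Ioi (0:ℝ), ENNReal.ofReal (h t / t ^ (1 + p)) := by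
  set f : ℝ → ENNReal := fun t => ENNReal.ofReal (h t / t ^ (1 + p)) with hf_def
  have hf : Measurable f :=
    ENNReal.measurable_ofReal.comp (hh.div (Real.continuous_rpow_const hp).measurable)
  have key := scaleL f hf hc
  have congr1 : ∫⁻ t in Ioi (0:ℝ), ENNReal.ofReal (h (c * t) / t ^ (1 + p)) =
      ∫⁻ t in Ioi (0:ℝ), ENNReal.ofReal (c ^ (1 + p)) * f (c * t) := by
    refine setLIntegral_congr_fun_ae measurableSet_Ioi (Filter.Eventually.of_forall ?_)
    intro t ht
    have ht0 : (0:ℝ) < t := ht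
    have hct : (c * t) ^ (1 + p) = c ^ (1 + p) * t ^ (1 + p) :=
      Real.mul_rpow hc.le ht0.le
    rw [hf_def]
    rw [← ENNReal.ofReal_mul (Real.rpow_nonneg hc.le _)]
    congr 1
    rw [hct]
    field_simp
  rw [congr1, lintegral_const_mul' _ _ ENNReal.ofReal_ne_top, key, ← mul_assoc,
    ← ENNReal.ofReal_mul (Real.rpow_nonneg hc.le _)]
  congr 2
  rw [Real.rpow_add hc, Real.rpow_one]
  field_simp

lemma cosA {p : ℝ} (hp1 : 1 ≤ p) (a : ℝ) :
    ∫⁻ t in Ioi (0:ℝ), ENNReal.ofReal ((1 - Real.cos (a * t)) / t ^ (1 + p)) =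
      ENNReal.ofReal (|a| ^ p) * K0 p := by
  rcases eq_or_ne a 0 with rfl | ha
  · simp [Real.zero_rpow (by linarith : p ≠ 0)]
  · have hc : (0:ℝ) < |a| := abs_pos.mpr ha
    have hcos : ∀ t : ℝ, Real.cos (|a| * t) = Real.cos (a * t) := by
      intro t
      rcases abs_cases a with ⟨h, _⟩ | ⟨h, _⟩
      · rw [h]
      · rw [h, neg_mul, Real.cos_neg]
    have := scale_kernel (p := p) (h := fun t => 1 - Real.cos t)
      (measurable_const.sub Real.continuous_cos.measurable) (by linarith) hc
    simp only [hcos] at this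
    exact this

lemma expB {p q : ℝ} (hp1 : 1 ≤ p) (hq0 : 0 < q) {A : ℝ} (hA : 0 ≤ A) :
    ∫⁻ t in Ioi (0:ℝ), ENNReal.ofReal ((1 - Real.exp (-(A * t ^ q))) / t ^ (1 + p)) =
      ENNReal.ofReal (A ^ (p / q)) * J1 p q := by
  rcases eq_or_lt_of_le hA with rfl | hA0
  · simp [Real.zero_rpow (by positivity : p / q ≠ 0)]
  · set c : ℝ := A ^ (1 / q) with hc_def
    have hc : 0 < c := Real.rpow_pos_of_pos hA0 _
    have hcq : c ^ q = A := by
      rw [hc_def, ← Real.rpow_mul hA, one_div, inv_mul_cancel₀ (ne_of_gt hq0), Real.rpow_one]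
    have hmeas : Measurable (fun t : ℝ => 1 - Real.exp (-(t ^ q))) :=
      measurable_const.sub ((Real.continuous_exp.measurable).comp
        ((Real.continuous_rpow_const hq0.le).measurable.neg))
    have key := scale_kernel (p := p) (h := fun t => 1 - Real.exp (-(t ^ q)))
      hmeas (by linarith) hc
    have congr1 : ∫⁻ t in Ioi (0:ℝ), ENNReal.ofReal ((1 - Real.exp (-(A * t ^ q))) / t ^ (1 + p)) =
        ∫⁻ t in Ioi (0:ℝ), ENNReal.ofReal ((1 - Real.exp (-((c * t) ^ q))) / t ^ (1 + p)) := by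
      refine setLIntegral_congr_fun_ae measurableSet_Ioi (Filter.Eventually.of_forall ?_)
      intro t ht
      have : (c * t) ^ q = A * t ^ q := by
        rw [Real.mul_rpow hc.le (le_of_lt ht), hcq]
      rw [this]
    rw [congr1, key]
    congr 1
    rw [hc_def, ← Real.rpow_mul hA]
    congr 1
    field_simp

lemma core {Ω : Type*} [MeasurableSpace Ω] (μ : Measure Ω) [IsProbabilityMeasure μ]
    {Y : Ω → ℝ} (hY : Measurable Y) {p q A : ℝ} (hp1 : 1 ≤ p) (hp2 : p < 2) (hq0 : 0 < q) (hA : 0 ≤ A)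
    (hchar : ∀ s : ℝ, 0 < s → ∫ ω, Real.cos (Y ω * s) ∂μ = Real.exp (-(A * s ^ q))) :
    (∫⁻ ω, ENNReal.ofReal (|Y ω| ^ p) ∂μ) * K0 p = ENNReal.ofReal (A ^ (p / q)) * J1 p q := by
  have h1p : (0:ℝ) ≤ 1 + p := by linarith
  have hFmeas : Measurable (fun z : Ω × ℝ =>
      ENNReal.ofReal ((1 - Real.cos (Y z.1 * z.2)) / z.2 ^ (1 + p))) := by
    apply ENNReal.measurable_ofReal.comp
    exact (measurable_const.sub (Real.continuous_cos.measurable.comp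
      ((hY.comp measurable_fst).mul measurable_snd))).div
      ((Real.continuous_rpow_const h1p).measurable.comp measurable_snd)
  have swap := lintegral_lintegral_swap (μ := μ) (ν := volume.restrict (Ioi (0:ℝ)))
    (f := fun ω t => ENNReal.ofReal ((1 - Real.cos (Y ω * t)) / t ^ (1 + p)))
    hFmeas.aemeasurable
  have left : ∫⁻ ω, ∫⁻ t in Ioi (0:ℝ),
      ENNReal.ofReal ((1 - Real.cos (Y ω * t)) / t ^ (1 + p)) ∂volume ∂μ =
      (∫⁻ ω, ENNReal.ofReal (|Y ω| ^ p) ∂μ) * K0 p := by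
    have : ∀ ω, ∫⁻ t in Ioi (0:ℝ),
        ENNReal.ofReal ((1 - Real.cos (Y ω * t)) / t ^ (1 + p)) ∂volume =
        ENNReal.ofReal (|Y ω| ^ p) * K0 p := by
      intro ω
      have := cosA hp1 (Y ω)
      simpa [mul_comm] using this
    rw [lintegral_congr this]
    exact lintegral_mul_const' (K0 p) _ (K0_lt_top hp1 hp2).ne
  have right : ∫⁻ t in Ioi (0:ℝ), ∫⁻ ω,
      ENNReal.ofReal ((1 - Real.cos (Y ω * t)) / t ^ (1 + p)) ∂μ ∂volume =
      ENNReal.ofReal (A ^ (p / q)) * J1 p q := by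
    have inner : ∀ t ∈ Ioi (0:ℝ), ∫⁻ ω,
        ENNReal.ofReal ((1 - Real.cos (Y ω * t)) / t ^ (1 + p)) ∂μ =
        ENNReal.ofReal ((1 - Real.exp (-(A * t ^ q))) / t ^ (1 + p)) := by
      intro t ht
      have ht0 : (0:ℝ) < t := ht
      have hden : (0:ℝ) < t ^ (1 + p) := Real.rpow_pos_of_pos ht0 _
      have hcos_meas : Measurable (fun ω => Real.cos (Y ω * t)) :=
        Real.continuous_cos.measurable.comp (hY.mul_const t)
      have hcos_int : Integrable (fun ω => Real.cos (Y ω * t)) μ := by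
        refine (integrable_const (1:ℝ)).mono' hcos_meas.aestronglyMeasurable ?_
        exact Filter.Eventually.of_forall fun ω => by
          simpa using Real.abs_cos_le_one (Y ω * t)
      have hint : Integrable (fun ω => 1 - Real.cos (Y ω * t)) μ :=
        (integrable_const (1:ℝ)).sub hcos_int
      have hval : ∫ ω, (1 - Real.cos (Y ω * t)) ∂μ = 1 - Real.exp (-(A * t ^ q)) := by
        rw [integral_sub (integrable_const (1:ℝ)) hcos_int, hchar t ht0]
        simp
      calc ∫⁻ ω, ENNReal.ofReal ((1 - Real.cos (Y ω * t)) / t ^ (1 + p)) ∂μ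
          = ∫⁻ ω, ENNReal.ofReal (1 - Real.cos (Y ω * t)) / ENNReal.ofReal (t ^ (1 + p)) ∂μ := by
            exact lintegral_congr fun ω => ENNReal.ofReal_div_of_pos hden
        _ = (∫⁻ ω, ENNReal.ofReal (1 - Real.cos (Y ω * t)) ∂μ) / ENNReal.ofReal (t ^ (1 + p)) := by
            simp_rw [div_eq_mul_inv]
            exact lintegral_mul_const' _ _ (by simp [hden])
        _ = ENNReal.ofReal (1 - Real.exp (-(A * t ^ q))) / ENNReal.ofReal (t ^ (1 + p)) := by
            rw [← ofReal_integral_eq_lintegral_ofReal hint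
              (Filter.Eventually.of_forall fun ω => by
                simp only [Pi.zero_apply]
                have := Real.cos_le_one (Y ω * t); linarith), hval]
        _ = ENNReal.ofReal ((1 - Real.exp (-(A * t ^ q))) / t ^ (1 + p)) := by
            rw [ENNReal.ofReal_div_of_pos hden]
    rw [setLIntegral_congr_fun_ae measurableSet_Ioi (Filter.Eventually.of_forall inner)]
    exact expB hp1 hq0 hA
  rw [← left, swap, right]

lemma char_to_cos {Ω : Type*} [MeasurableSpace Ω] (μ : Measure Ω) [IsProbabilityMeasure μ]
    {Y : Ω → ℝ} (hY : Measurable Y) (u : ℝ)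
    (h : ∫ ω, Complex.exp (Complex.I * ((Y ω : ℝ) : ℂ)) ∂μ = Complex.exp (-((u : ℝ) : ℂ))) :
    ∫ ω, Real.cos (Y ω) ∂μ = Real.exp (-u) := by
  have hmeas : Measurable (fun ω => Complex.exp (Complex.I * ((Y ω : ℝ) : ℂ))) :=
    Complex.measurable_exp.comp (measurable_const.mul (Complex.measurable_ofReal.comp hY))
  have hint : Integrable (fun ω => Complex.exp (Complex.I * ((Y ω : ℝ) : ℂ))) μ := by
    refine (integrable_const (1:ℝ)).mono' hmeas.aestronglyMeasurable ?_
    refine Filter.Eventually.of_forall fun ω => ?_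
    rw [Complex.norm_exp]
    simp
  have hre : ∫ ω, Real.cos (Y ω) ∂μ =
      (∫ ω, Complex.exp (Complex.I * ((Y ω : ℝ) : ℂ)) ∂μ).re := by
    have h1 := integral_re (𝕜 := ℂ) hint
    rw [RCLike.re_to_complex] at h1
    rw [← h1]
    refine integral_congr_ae (Filter.Eventually.of_forall fun ω => ?_)
    show Real.cos (Y ω) = RCLike.re (Complex.exp (Complex.I * (Y ω : ℂ)))
    rw [RCLike.re_to_complex, mul_comm, Complex.exp_ofReal_mul_I_re]
  rw [hre, h, ← Complex.ofReal_neg, ← Complex.ofReal_exp, Complex.ofReal_re]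


/-- For `1 ≤ p < q < 2` and `n ≥ 2`, the norm of `ℓ_q^n` admits the integral
representation `‖x‖_q^p = c ∫ |⟨x,ξ⟩|^p dμ_q(ξ)` where `μ_q` is the standard symmetric
`q`-stable measure on `ℝⁿ` (characteristic function `exp(-‖t‖_q^q)`), `ν_q` its
one-dimensional analogue, and `c⁻¹ = ∫ |t|^p dν_q(t) < ∞`. -/
theorem lq_norm_stable_levy_p_representation
    (p q : ℝ) (n : ℕ) (hpq : 1 ≤ p) (hq : p < q) (hq2 : q < 2) (hn : 2 ≤ n)
    (μ : Measure (EuclideanSpace ℝ (Fin n))) [IsProbabilityMeasure μ]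
    (hμ : ∀ t : EuclideanSpace ℝ (Fin n),
      ∫ x, Complex.exp (Complex.I * ((∑ i, x i * t i : ℝ) : ℂ)) ∂μ =
        Complex.exp (-((∑ i, |t i| ^ q : ℝ) : ℂ)))
    (ν : Measure ℝ) [IsProbabilityMeasure ν]
    (hν : ∀ t : ℝ,
      ∫ x, Complex.exp (Complex.I * ((x * t : ℝ) : ℂ)) ∂ν =
        Complex.exp (-((|t| ^ q : ℝ) : ℂ))) :
    Integrable (fun t : ℝ => |t| ^ p) ν ∧
    ∃ c : ℝ, 0 < c ∧ c⁻¹ = ∫ t, |t| ^ p ∂ν ∧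
      ∀ x : EuclideanSpace ℝ (Fin n),
        ((∑ i, |x i| ^ q) ^ (1 / q)) ^ p =
          c * ∫ ξ, |∑ i, x i * ξ i| ^ p ∂μ := by
  have hp0 : (0:ℝ) ≤ p := by linarith
  have hq0 : (0:ℝ) < q := by linarith
  have hp2 : p < 2 := by linarith
  have hK0 : K0 p ≠ 0 := (K0_pos hpq).ne'
  have hKt : K0 p ≠ ⊤ := (K0_lt_top hpq hp2).ne
  have hJ0 : J1 p q ≠ 0 := (J1_pos hpq hq0.le).ne'
  have hJt : J1 p q ≠ ⊤ := (J1_lt_top hpq hq).ne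
  -- ν side
  have hνcos : ∀ s : ℝ, 0 < s →
      ∫ t, Real.cos ((fun r : ℝ => r) t * s) ∂ν = Real.exp (-((1:ℝ) * s ^ q)) := by
    intro s hs
    have h := char_to_cos ν (Y := fun t : ℝ => t * s)
      (measurable_id.mul_const s) (|s| ^ q) (hν s)
    simpa [abs_of_pos hs, one_mul] using h
  have hνcore := core ν measurable_id hpq hp2 hq0 zero_le_one hνcos
  set Lν := ∫⁻ t, ENNReal.ofReal (|t| ^ p) ∂ν with hLν_def
  have hνcore' : Lν = J1 p q / K0 p := by
    rw [ENNReal.eq_div_iff hK0 hKt, mul_comm]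
    simpa [Real.one_rpow] using hνcore
  have hLνt : Lν ≠ ⊤ := by
    rw [hνcore']; exact (ENNReal.div_lt_top hJt hK0).ne
  have hLν0 : Lν ≠ 0 := by
    rw [hνcore']
    simp [ENNReal.div_eq_zero_iff, hJ0, hKt]
  have hmeas_abs : Measurable fun t : ℝ => |t| ^ p :=
    (Real.continuous_rpow_const hp0).measurable.comp measurable_abs
  have hint_ν : Integrable (fun t : ℝ => |t| ^ p) ν := by
    refine ⟨hmeas_abs.aestronglyMeasurable, ?_⟩
    rw [hasFiniteIntegral_iff_ofReal
      (Filter.Eventually.of_forall fun t => Real.rpow_nonneg (abs_nonneg t) p)]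
    exact hLνt.lt_top
  have hνint : ∫ t, |t| ^ p ∂ν = Lν.toReal := by
    rw [integral_eq_lintegral_of_nonneg_ae
      (Filter.Eventually.of_forall fun t => Real.rpow_nonneg (abs_nonneg t) p)
      hmeas_abs.aestronglyMeasurable]
  have hLνR : 0 < Lν.toReal := ENNReal.toReal_pos hLν0 hLνt
  refine ⟨hint_ν, (Lν.toReal)⁻¹, inv_pos.mpr hLνR, by rw [inv_inv, hνint], ?_⟩
  intro x
  set A := ∑ i, |x i| ^ q with hA_def
  have hA : 0 ≤ A := Finset.sum_nonneg fun i _ => Real.rpow_nonneg (abs_nonneg _) _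
  set Y : EuclideanSpace ℝ (Fin n) → ℝ := fun ξ => ∑ i, x i * ξ i with hY_def
  have hYmeas : Measurable Y := by
    apply Finset.measurable_sum
    intro i _
    have : Measurable fun ξ : EuclideanSpace ℝ (Fin n) => ξ i := (measurable_pi_apply i).comp (WithLp.measurable_ofLp _ _)
    exact this.const_mul (x i)
  have hμcos : ∀ s : ℝ, 0 < s →
      ∫ ξ, Real.cos (Y ξ * s) ∂μ = Real.exp (-(A * s ^ q)) := by
    intro s hs
    have h := hμ (s • x)
    have heq1 : ∀ ξ : EuclideanSpace ℝ (Fin n), ∑ i, ξ i * (s • x) i = Y ξ * s := by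
      intro ξ
      simp only [hY_def, PiLp.smul_apply, smul_eq_mul, Finset.sum_mul]
      exact Finset.sum_congr rfl fun i _ => by ring
    have heq2 : ∑ i, |(s • x) i| ^ q = A * s ^ q := by
      simp only [PiLp.smul_apply, smul_eq_mul, hA_def, Finset.sum_mul]
      refine Finset.sum_congr rfl fun i _ => ?_
      rw [abs_mul, Real.mul_rpow (abs_nonneg s) (abs_nonneg (x i)), abs_of_pos hs]
      ring
    simp_rw [heq1, heq2] at h
    exact char_to_cos μ (Y := fun ξ => Y ξ * s) (hYmeas.mul_const s) (A * s ^ q) h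
  have hμcore := core μ hYmeas hpq hp2 hq0 hA hμcos
  have hμ' : (∫⁻ ξ, ENNReal.ofReal (|Y ξ| ^ p) ∂μ) =
      ENNReal.ofReal (A ^ (p / q)) * J1 p q / K0 p := by
    rw [ENNReal.eq_div_iff hK0 hKt, mul_comm]
    exact hμcore
  have hμmeas : Measurable fun ξ => |Y ξ| ^ p :=
    (Real.continuous_rpow_const hp0).measurable.comp hYmeas.abs
  have hμint : ∫ ξ, |Y ξ| ^ p ∂μ = (∫⁻ ξ, ENNReal.ofReal (|Y ξ| ^ p) ∂μ).toReal := by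
    rw [integral_eq_lintegral_of_nonneg_ae
      (Filter.Eventually.of_forall fun ξ => Real.rpow_nonneg (abs_nonneg _) p)
      hμmeas.aestronglyMeasurable]
  have hpow : (A ^ (1/q)) ^ p = A ^ (p / q) := by
    rw [← Real.rpow_mul hA]
    congr 1
    field_simp
  calc (A ^ (1/q)) ^ p = A ^ (p / q) := hpow
    _ = (Lν.toReal)⁻¹ * ∫ ξ, |Y ξ| ^ p ∂μ := by
        rw [hμint, hμ', mul_div_assoc, ENNReal.toReal_mul,
          ENNReal.toReal_ofReal (Real.rpow_nonneg hA _), ← hνcore']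
        field_simp
end

section
/- Assume n ≥ 2, p ≥ 1, q ≥ 1, q ≠ 2, and p ≠ q. Then ℓ_q^n does not embed linearly isometrically into ℓ_p. -/
open scoped BigOperators
open Real Set


lemma midpoint_rpow {p x y : ℝ} (hp : 1 ≤ p) (hx : 0 ≤ x) (hy : 0 ≤ y) :
    ((x + y) / 2) ^ p ≤ (x ^ p + y ^ p) / 2 := by
  have h := (convexOn_rpow hp).2 (mem_Ici.2 hx) (mem_Ici.2 hy)
    (by norm_num : (0:ℝ) ≤ 1/2) (by norm_num : (0:ℝ) ≤ 1/2) (by norm_num)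
  simp only [smul_eq_mul] at h
  calc ((x + y) / 2) ^ p = (1/2 * x + 1/2 * y) ^ p := by ring_nf
    _ ≤ 1/2 * x ^ p + 1/2 * y ^ p := h
    _ = (x ^ p + y ^ p) / 2 := by ring

lemma I1 {p : ℝ} (hp : 1 ≤ p) (u v : ℝ) : 2 * |u| ^ p ≤ |u + v| ^ p + |u - v| ^ p := by
  have h1 : |u| ≤ (|u + v| + |u - v|) / 2 := by
    have h := abs_add_le (u + v) (u - v)
    have e : u + v + (u - v) = 2 * u := by ring
    rw [e, abs_mul] at h
    simp only [abs_two] at h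
    linarith
  have h2 : |u| ^ p ≤ ((|u + v| + |u - v|) / 2) ^ p :=
    Real.rpow_le_rpow (abs_nonneg u) h1 (by linarith)
  have h3 := midpoint_rpow hp (abs_nonneg (u+v)) (abs_nonneg (u-v))
  linarith

lemma sq_rpow_half (x p : ℝ) : (x ^ 2) ^ (p / 2) = |x| ^ p := by
  rw [← sq_abs, ← Real.rpow_natCast |x| 2, ← Real.rpow_mul (abs_nonneg x)]
  norm_num
  rw [show (2:ℝ) * (p/2) = p by ring]

lemma I2 {p : ℝ} (hp : 2 ≤ p) (u v : ℝ) :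
    2 * (u ^ 2 + v ^ 2) ^ (p / 2) ≤ |u + v| ^ p + |u - v| ^ p := by
  have h := midpoint_rpow (p := p/2) (by linarith) (sq_nonneg (u+v)) (sq_nonneg (u-v))
  rw [sq_rpow_half, sq_rpow_half] at h
  have e : ((u+v)^2 + (u-v)^2) / 2 = u^2 + v^2 := by ring
  rw [e] at h
  linarith

-- Bernoulli-type: (x+y)^r ≥ x^r + r * x^(r-1) * y
lemma I3 {r x y : ℝ} (hr : 1 ≤ r) (hx : 0 < x) (hy : 0 ≤ y) :
    x ^ r + r * x ^ (r - 1) * y ≤ (x + y) ^ r := by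
  have hs0 : (0:ℝ) ≤ y / x := by positivity
  have hs : (-1:ℝ) ≤ y / x := by linarith
  have h := one_add_mul_self_le_rpow_one_add hs hr
  have hxr : (0:ℝ) < x ^ r := rpow_pos_of_pos hx r
  have key : x ^ r * (1 + r * (y / x)) ≤ x ^ r * (1 + y / x) ^ r :=
    mul_le_mul_of_nonneg_left h hxr.le
  have e1 : x ^ r * (1 + y / x) ^ r = (x + y) ^ r := by
    rw [← Real.mul_rpow hx.le (by positivity)]
    congr 1
    field_simp
  have e2 : x ^ r * (1 + r * (y / x)) = x ^ r + r * (x ^ r / x) * y := by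
    field_simp
  have e3 : x ^ r / x = x ^ (r - 1) := by
    rw [Real.rpow_sub hx, Real.rpow_one]
  rw [e1, e2, e3] at key
  exact key

-- secant bound: (1+x)^r ≤ 1 + (2^r - 1) x  for x ∈ [0,1], r ≥ 1
lemma I4 {r x : ℝ} (hr : 1 ≤ r) (hx0 : 0 ≤ x) (hx1 : x ≤ 1) :
    (1 + x) ^ r ≤ 1 + (2 ^ r - 1) * x := by
  have h := (convexOn_rpow hr).2 (mem_Ici.2 (by norm_num : (0:ℝ) ≤ 1))
    (mem_Ici.2 (by norm_num : (0:ℝ) ≤ 2)) (by linarith : (0:ℝ) ≤ 1 - x) hx0 (by ring)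
  simp only [smul_eq_mul] at h
  have e : (1 - x) * 1 + x * 2 = 1 + x := by ring
  rw [e] at h
  have h1 : (1:ℝ) ^ r = 1 := Real.one_rpow r
  rw [h1] at h
  linarith


lemma quadBound {f f' f'' : ℝ → ℝ} {t₀ h₀ K : ℝ} (hh₀ : 0 < h₀)
    (hf : ∀ t ∈ Icc (t₀ - h₀) (t₀ + h₀), HasDerivAt f (f' t) t)
    (hf' : ∀ t ∈ Icc (t₀ - h₀) (t₀ + h₀), HasDerivAt f' (f'' t) t)
    (hK : ∀ t ∈ Icc (t₀ - h₀) (t₀ + h₀), |f'' t| ≤ K) :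
    ∀ h, 0 ≤ h → h ≤ h₀ → f (t₀ + h) + f (t₀ - h) - 2 * f t₀ ≤ 2 * K * h ^ 2 := by
  intro h hh hhh
  -- f' is K-Lipschitz on the interval
  have hlip : ∀ x ∈ Icc (t₀ - h₀) (t₀ + h₀), ∀ y ∈ Icc (t₀ - h₀) (t₀ + h₀),
      |f' y - f' x| ≤ K * |y - x| := by
    intro x hx y hy
    have := Convex.norm_image_sub_le_of_norm_hasDerivWithin_le
      (f := f') (f' := f'') (C := K) (s := Icc (t₀ - h₀) (t₀ + h₀))
      (fun z hz => (hf' z hz).hasDerivWithinAt)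
      (fun z hz => by simpa using hK z hz) (convex_Icc _ _) hx hy
    simpa [Real.norm_eq_abs] using this
  -- the symmetrized function u
  set u : ℝ → ℝ := fun s => f (t₀ + s) + f (t₀ - s) with hu
  have humem : ∀ s ∈ Icc (0:ℝ) h, (t₀ + s) ∈ Icc (t₀ - h₀) (t₀ + h₀) ∧
      (t₀ - s) ∈ Icc (t₀ - h₀) (t₀ + h₀) := by
    intro s hs
    obtain ⟨hs0, hs1⟩ := hs
    constructor <;> constructor <;> linarith
  have hud : ∀ s ∈ Icc (0:ℝ) h, HasDerivAt u (f' (t₀ + s) - f' (t₀ - s)) s := by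
    intro s hs
    obtain ⟨h1, h2⟩ := humem s hs
    have d1 : HasDerivAt (fun s : ℝ => f (t₀ + s)) (f' (t₀ + s) * 1) s :=
      (hf _ h1).comp s ((hasDerivAt_id s).const_add t₀)
    have d2 : HasDerivAt (fun s : ℝ => f (t₀ - s)) (f' (t₀ - s) * (-1)) s :=
      (hf _ h2).comp s ((hasDerivAt_id s).neg.const_add t₀)
    exact (d1.add d2).congr_deriv (by ring)
  have hub : ∀ s ∈ Icc (0:ℝ) h, ‖f' (t₀ + s) - f' (t₀ - s)‖ ≤ 2 * K * h := by
    intro s hs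
    obtain ⟨h1, h2⟩ := humem s hs
    have := hlip _ h2 _ h1
    have e : |(t₀ + s) - (t₀ - s)| = 2 * s := by
      rw [show (t₀ + s) - (t₀ - s) = 2 * s by ring]
      rw [abs_of_nonneg (by nlinarith [hs.1] : (0:ℝ) ≤ 2 * s)]
    rw [e] at this
    have hK0 : 0 ≤ K := le_trans (abs_nonneg _) (hK t₀ (by constructor <;> linarith))
    have : |f' (t₀ + s) - f' (t₀ - s)| ≤ K * (2 * s) := this
    have h2s : K * (2 * s) ≤ 2 * K * h := by nlinarith [hs.1, hs.2]
    simp only [Real.norm_eq_abs]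
    linarith
  have := Convex.norm_image_sub_le_of_norm_hasDerivWithin_le
    (f := u) (f' := fun s => f' (t₀ + s) - f' (t₀ - s)) (C := 2 * K * h) (s := Icc (0:ℝ) h)
    (fun z hz => (hud z hz).hasDerivWithinAt) hub (convex_Icc _ _)
    (left_mem_Icc.2 hh) (right_mem_Icc.2 hh)
  have e : u h - u 0 = f (t₀ + h) + f (t₀ - h) - 2 * f t₀ := by
    simp [hu]; ring
  rw [Real.norm_eq_abs, Real.norm_eq_abs, e] at this
  have : f (t₀ + h) + f (t₀ - h) - 2 * f t₀ ≤ 2 * K * h * |h - 0| := le_trans (le_abs_self _) this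
  rw [sub_zero, abs_of_nonneg hh] at this
  nlinarith [this]


-- derivative helpers
lemma hd_one_add_rpow {q t : ℝ} (ht : t ≠ 0) :
    HasDerivAt (fun t : ℝ => 1 + t ^ q) (q * t ^ (q - 1)) t := by
  simpa using ((Real.hasDerivAt_rpow_const (Or.inl ht))).const_add 1

lemma smooth2 {p q t₀ : ℝ} (ht₀ : 0 < t₀) :
    ∃ K, ∀ h, 0 ≤ h → h ≤ t₀/2 →
      (1+(t₀+h)^q)^(p/q) + (1+(t₀-h)^q)^(p/q) - 2*(1+t₀^q)^(p/q) ≤ K * h^2 := by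
  set g : ℝ → ℝ := fun t => (1 + t ^ q) ^ (p/q) with hg
  set g' : ℝ → ℝ := fun t => p/q * (1 + t ^ q) ^ (p/q - 1) * (q * t ^ (q-1)) with hg'
  set g'' : ℝ → ℝ := fun t =>
    (p/q * ((p/q - 1) * (1 + t ^ q) ^ (p/q - 2) * (q * t ^ (q-1)))) * (q * t ^ (q-1))
      + p/q * (1 + t ^ q) ^ (p/q - 1) * (q * ((q-1) * t ^ (q-2))) with hg''
  have hpos : ∀ t ∈ Icc (t₀ - t₀/2) (t₀ + t₀/2), 0 < t := by
    intro t ht; have := ht.1; linarith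
  have hbpos : ∀ t : ℝ, 0 < t → (0:ℝ) < 1 + t ^ q := by
    intro t ht; positivity
  have hdg : ∀ t ∈ Icc (t₀ - t₀/2) (t₀ + t₀/2), HasDerivAt g (g' t) t := by
    intro t ht
    have h1 := hd_one_add_rpow (q := q) (hpos t ht).ne'
    have h2 : HasDerivAt (fun x : ℝ => x ^ (p/q)) (p/q * (1 + t ^ q) ^ (p/q - 1)) (1 + t ^ q) :=
      Real.hasDerivAt_rpow_const (Or.inl (hbpos t (hpos t ht)).ne')
    exact h2.comp t h1
  have hdg' : ∀ t ∈ Icc (t₀ - t₀/2) (t₀ + t₀/2), HasDerivAt g' (g'' t) t := by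
    intro t ht
    have ht0 := hpos t ht
    have h1 := hd_one_add_rpow (q := q) ht0.ne'
    have h2 : HasDerivAt (fun x : ℝ => x ^ (p/q - 1)) ((p/q - 1) * (1 + t ^ q) ^ (p/q - 1 - 1)) (1 + t ^ q) :=
      Real.hasDerivAt_rpow_const (Or.inl (hbpos t ht0).ne')
    have hu : HasDerivAt (fun t : ℝ => p/q * (1 + t ^ q) ^ (p/q - 1))
        (p/q * ((p/q - 1) * (1 + t ^ q) ^ (p/q - 2) * (q * t ^ (q-1)))) t := by
      have := (h2.comp t h1).const_mul (p/q)
      have e : p/q - 1 - 1 = p/q - 2 := by ring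
      simpa [e, mul_comm, mul_assoc, mul_left_comm] using this
    have hv : HasDerivAt (fun t : ℝ => q * t ^ (q-1)) (q * ((q-1) * t ^ (q-1-1))) t :=
      (Real.hasDerivAt_rpow_const (Or.inl ht0.ne')).const_mul q
    have e2 : q - 1 - 1 = q - 2 := by ring
    rw [e2] at hv
    exact hu.mul hv
  have hcont : ContinuousOn g'' (Icc (t₀ - t₀/2) (t₀ + t₀/2)) := by
    intro t ht
    have ht0 := hpos t ht
    apply ContinuousAt.continuousWithinAt
    have c1 : ContinuousAt (fun t : ℝ => t ^ (q-1)) t :=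
      Real.continuousAt_rpow_const _ _ (Or.inl ht0.ne')
    have c2 : ContinuousAt (fun t : ℝ => t ^ (q-2)) t :=
      Real.continuousAt_rpow_const _ _ (Or.inl ht0.ne')
    have cb : ContinuousAt (fun t : ℝ => 1 + t ^ q) t :=
      continuousAt_const.add (Real.continuousAt_rpow_const _ _ (Or.inl ht0.ne'))
    have cB1 : ContinuousAt (fun t : ℝ => (1 + t ^ q) ^ (p/q - 2)) t :=
      cb.rpow_const (Or.inl (hbpos t ht0).ne')
    have cB2 : ContinuousAt (fun t : ℝ => (1 + t ^ q) ^ (p/q - 1)) t :=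
      cb.rpow_const (Or.inl (hbpos t ht0).ne')
    exact ((continuousAt_const.mul ((continuousAt_const.mul cB1).mul
      (continuousAt_const.mul c1))).mul (continuousAt_const.mul c1)).add
      ((continuousAt_const.mul cB2).mul (continuousAt_const.mul
        (continuousAt_const.mul c2)))
  obtain ⟨K, hKb⟩ := (isCompact_Icc (a := t₀ - t₀/2) (b := t₀ + t₀/2)).exists_bound_of_continuousOn hcont
  have hK : ∀ t ∈ Icc (t₀ - t₀/2) (t₀ + t₀/2), |g'' t| ≤ K := by
    intro t ht; simpa [Real.norm_eq_abs] using hKb t ht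
  refine ⟨2 * K, ?_⟩
  intro h hh0 hh1
  have := quadBound (half_pos ht₀) hdg hdg' hK h hh0 hh1
  simpa [hg] using this



lemma I5 {p : ℝ} (hp : 2 ≤ p) :
    ∃ C, 0 < C ∧ ∀ w : ℝ, |1 + w| ^ p + |1 - w| ^ p ≤ 2 + C * (w ^ 2 + |w| ^ p) := by
  set f : ℝ → ℝ := fun w => (1 + w) ^ p with hf
  set f' : ℝ → ℝ := fun w => p * (1 + w) ^ (p - 1) with hf'
  set f'' : ℝ → ℝ := fun w => p * ((p - 1) * (1 + w) ^ (p - 2)) with hf''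
  have hpos : ∀ w ∈ Icc ((0:ℝ) - 1/2) ((0:ℝ) + 1/2), (0:ℝ) < 1 + w := by
    intro w hw; have := hw.1; linarith
  have hd1 : ∀ w ∈ Icc ((0:ℝ) - 1/2) ((0:ℝ) + 1/2), HasDerivAt f (f' w) w := by
    intro w hw
    have h := (Real.hasDerivAt_rpow_const (x := 1 + w) (p := p)
      (Or.inl (hpos w hw).ne')).comp w ((hasDerivAt_id w).const_add 1)
    exact h.congr_deriv (mul_one _)
  have hd2 : ∀ w ∈ Icc ((0:ℝ) - 1/2) ((0:ℝ) + 1/2), HasDerivAt f' (f'' w) w := by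
    intro w hw
    have h := ((Real.hasDerivAt_rpow_const (x := 1 + w) (p := p - 1)
      (Or.inl (hpos w hw).ne')).comp w ((hasDerivAt_id w).const_add 1)).const_mul p
    have e : p - 1 - 1 = p - 2 := by ring
    simpa [hf', hf'', e] using h
  have hK : ∀ w ∈ Icc ((0:ℝ) - 1/2) ((0:ℝ) + 1/2), |f'' w| ≤ p * ((p-1) * 2 ^ p) := by
    intro w hw
    have h1 : (0:ℝ) < 1 + w := hpos w hw
    have h2 : (1 + w : ℝ) ≤ 2 := by have := hw.2; norm_num at this ⊢; linarith
    have h3 : (1 + w) ^ (p - 2) ≤ 2 ^ (p - 2) := Real.rpow_le_rpow h1.le h2 (by linarith)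
    have h4 : (2:ℝ) ^ (p - 2) ≤ 2 ^ p :=
      Real.rpow_le_rpow_of_exponent_le (by norm_num) (by linarith)
    have h5 : (0:ℝ) ≤ (1 + w) ^ (p - 2) := Real.rpow_nonneg h1.le _
    have hp1 : (0:ℝ) ≤ p - 1 := by linarith
    have hnn : (0:ℝ) ≤ p * ((p - 1) * (1 + w) ^ (p - 2)) :=
      mul_nonneg (by linarith) (mul_nonneg hp1 h5)
    have : f'' w = p * ((p - 1) * (1 + w) ^ (p - 2)) := rfl
    rw [this, abs_of_nonneg hnn]
    have hXp : (1 + w) ^ (p - 2) ≤ 2 ^ p := le_trans h3 h4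
    exact mul_le_mul_of_nonneg_left
      (mul_le_mul_of_nonneg_left hXp hp1) (by linarith)
  have hQ := quadBound (by norm_num : (0:ℝ) < 1/2) hd1 hd2 hK
  set K := p * ((p-1) * 2 ^ p) with hKdef
  have hKpos : 0 < K := by
    have : (0:ℝ) < 2 ^ p := Real.rpow_pos_of_pos (by norm_num) p
    have : (0:ℝ) < p - 1 := by linarith
    positivity
  refine ⟨2 * K + 2 * 3 ^ p, by positivity, ?_⟩
  intro w
  rcases le_or_gt |w| (1/2) with hw | hw
  · -- small w : use quadBound at h = |w|
    have h := hQ |w| (abs_nonneg w) hw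
    have hf0 : f 0 = 1 := by simp [hf]
    have e1 : |1 + w| ^ p + |1 - w| ^ p = f (0 + |w|) + f (0 - |w|) := by
      rcases abs_cases w with ⟨h1, _⟩ | ⟨h1, h2⟩
      · rw [h1]; simp only [hf, zero_add, zero_sub]
        have a1 : |1 + w| = 1 + w := abs_of_nonneg (by
          have : |w| ≤ 1/2 := hw; have := abs_le.1 this; linarith)
        have a2 : |1 - w| = 1 - w := abs_of_nonneg (by
          have := abs_le.1 hw; linarith)
        rw [a1, a2]; ring_nf
      · rw [h1]; simp only [hf, zero_add, zero_sub]
        have a1 : |1 + w| = 1 + w := abs_of_nonneg (by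
          have := abs_le.1 hw; linarith)
        have a2 : |1 - w| = 1 - w := abs_of_nonneg (by
          have := abs_le.1 hw; linarith)
        rw [a1, a2]; ring_nf
    rw [e1]
    have h2 : f (0 + |w|) + f (0 - |w|) ≤ 2 * f 0 + 2 * K * |w| ^ 2 := by linarith
    rw [hf0] at h2
    have e2 : |w| ^ 2 = w ^ 2 := sq_abs w
    rw [e2] at h2
    have hwp : (0:ℝ) ≤ |w| ^ p := Real.rpow_nonneg (abs_nonneg w) p
    have h3p : (0:ℝ) < 3 ^ p := Real.rpow_pos_of_pos (by norm_num) p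
    nlinarith [mul_nonneg hKpos.le hwp, mul_nonneg h3p.le hwp,
      mul_nonneg h3p.le (sq_nonneg w)]
  · -- large w
    have hw2 : (1:ℝ) ≤ 2 * |w| := by linarith
    have b1 : |1 + w| ≤ 3 * |w| := by
      calc |1 + w| ≤ |(1:ℝ)| + |w| := abs_add_le 1 w
        _ = 1 + |w| := by norm_num
        _ ≤ 3 * |w| := by linarith
    have b2 : |1 - w| ≤ 3 * |w| := by
      calc |1 - w| ≤ |(1:ℝ)| + |w| := abs_sub 1 w
        _ = 1 + |w| := by norm_num
        _ ≤ 3 * |w| := by linarith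
    have c1 : |1 + w| ^ p ≤ (3 * |w|) ^ p := Real.rpow_le_rpow (abs_nonneg _) b1 (by linarith)
    have c2 : |1 - w| ^ p ≤ (3 * |w|) ^ p := Real.rpow_le_rpow (abs_nonneg _) b2 (by linarith)
    have e3 : (3 * |w|) ^ p = 3 ^ p * |w| ^ p :=
      Real.mul_rpow (by norm_num) (abs_nonneg w)
    have h3p : (0:ℝ) < 3 ^ p := Real.rpow_pos_of_pos (by norm_num) p
    have hwp : (0:ℝ) ≤ |w| ^ p := Real.rpow_nonneg (abs_nonneg w) p
    have hK2 : (0:ℝ) < 2 * K := by linarith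
    nlinarith [mul_nonneg hK2.le (sq_nonneg w), mul_nonneg hK2.le hwp,
      mul_nonneg h3p.le (sq_nonneg w), mul_nonneg h3p.le hwp]


lemma small_power {c C ε h₀ : ℝ} (hc : 0 < c) (hε : 0 < ε) (hh₀ : 0 < h₀)
    (H : ∀ h : ℝ, 0 < h → h ≤ h₀ → c ≤ C * h ^ ε) : False := by
  have hC : 0 < C := by
    by_contra hCn
    push_neg at hCn
    have h1 := H h₀ hh₀ le_rfl
    have h2 : (0:ℝ) < h₀ ^ ε := Real.rpow_pos_of_pos hh₀ ε
    nlinarith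
  set x := (c / (2*C)) ^ (1/ε) with hxdef
  have hcc : (0:ℝ) < c / (2*C) := by positivity
  have hx : 0 < x := Real.rpow_pos_of_pos hcc _
  have h := H (min h₀ x) (lt_min hh₀ hx) (min_le_left _ _)
  have h2 : (min h₀ x) ^ ε ≤ x ^ ε :=
    Real.rpow_le_rpow (le_min hh₀.le hx.le) (min_le_right _ _) hε.le
  have h3 : x ^ ε = c / (2*C) := by
    rw [hxdef, ← Real.rpow_mul hcc.le]
    rw [show 1/ε*ε = 1 by field_simp]
    exact Real.rpow_one _
  rw [h3] at h2
  have h4 : C * (min h₀ x) ^ ε ≤ C * (c / (2*C)) := mul_le_mul_of_nonneg_left h2 hC.le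
  have h5 : C * (c / (2*C)) = c / 2 := by field_simp
  linarith



set_option maxHeartbeats 2000000 in
lemma main_abstract {p q : ℝ} (hp : 1 ≤ p) (hq : 1 ≤ q) (hq2 : q ≠ 2) (hpq : p ≠ q)
    (A B : ℕ → ℝ)
    (hS : ∀ s t : ℝ, Summable (fun j => |s * A j + t * B j| ^ p))
    (hT : ∀ s t : ℝ, ∑' j, |s * A j + t * B j| ^ p = (|s| ^ q + |t| ^ q) ^ (p/q)) :
    False := by
  have hp0 : (0:ℝ) < p := by linarith
  have hq0 : (0:ℝ) < q := by linarith
  -- single-vector facts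
  have SA : Summable (fun j => |A j| ^ p) := by simpa using hS 1 0
  have SB : Summable (fun j => |B j| ^ p) := by simpa using hS 0 1
  have tA : ∑' j, |A j| ^ p = 1 := by
    have := hT 1 0
    simpa [Real.zero_rpow hq0.ne', Real.one_rpow] using this
  have tB : ∑' j, |B j| ^ p = 1 := by
    have := hT 0 1
    simpa [Real.zero_rpow hq0.ne', Real.one_rpow] using this
  set f : ℝ → ℕ → ℝ := fun t j => |A j + t * B j| ^ p with hfdef
  have Sf : ∀ t, Summable (f t) := by intro t; simpa [hfdef] using hS 1 t
  have Tf : ∀ t : ℝ, ∑' j, f t j = (1 + |t| ^ q) ^ (p/q) := by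
    intro t
    have := hT 1 t
    simpa [hfdef, Real.one_rpow] using this
  have fnonneg : ∀ t j, 0 ≤ f t j := fun t j => Real.rpow_nonneg (abs_nonneg _) p
  have hFsum : ∀ t : ℝ, Summable (fun j => f t j + f (-t) j) :=
    fun t => (Sf t).add (Sf (-t))
  have hF : ∀ t : ℝ, ∑' j, (f t j + f (-t) j) = 2 * (1 + |t| ^ q) ^ (p/q) := by
    intro t
    rw [Summable.tsum_add (Sf t) (Sf (-t)), Tf, Tf, abs_neg]
    ring
  by_cases hdisj : ∀ j, A j = 0 ∨ B j = 0
  · -- disjoint supports: contradiction at t = 1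
    have e : ∀ j, f 1 j + f (-1) j = 2 * |A j| ^ p + 2 * |B j| ^ p := by
      intro j
      rcases hdisj j with h | h <;>
        simp [hfdef, h, Real.zero_rpow hp0.ne'] <;> ring
    have e1 : ∑' j, (f 1 j + f (-1) j) = 2 * (2:ℝ) ^ (p/q) := by
      rw [hF 1]
      norm_num
    have e2 : ∑' j, (f 1 j + f (-1) j) = 4 := by
      rw [tsum_congr e, Summable.tsum_add (SA.mul_left 2) (SB.mul_left 2),
        tsum_mul_left, tsum_mul_left, tA, tB]
      norm_num
    have e3 : (2:ℝ) ^ (p/q) = 2 := by rw [e1] at e2; linarith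
    have e4 : p / q = 1 := by
      by_contra hne
      rcases lt_or_gt_of_ne hne with hlt | hgt
      · have := Real.rpow_lt_rpow_of_exponent_lt (by norm_num : (1:ℝ) < 2) hlt
        rw [Real.rpow_one] at this
        linarith
      · have := Real.rpow_lt_rpow_of_exponent_lt (by norm_num : (1:ℝ) < 2) hgt
        rw [Real.rpow_one] at this
        linarith
    exact hpq ((div_eq_one_iff_eq hq0.ne').1 e4)
  · push_neg at hdisj
    obtain ⟨j0, hA0, hB0⟩ := hdisj
    rcases lt_or_ge p 2 with hp2 | hp2
    · -- 1 ≤ p < 2 : kink argument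
      set t₀ : ℝ := |A j0 / B j0| with ht₀def
      have ht₀ : 0 < t₀ := abs_pos.2 (div_ne_zero hA0 hB0)
      obtain ⟨K, hK⟩ := smooth2 (p := p) (q := q) (t₀ := t₀) ht₀
      have main : ∀ h : ℝ, 0 < h → h ≤ t₀/2 → |B j0| ^ p ≤ K * h ^ (2 - p) := by
        intro h hh0 hh1
        set Δ : ℕ → ℝ := fun j => (f (t₀+h) j + f (-(t₀+h)) j)
          + (f (t₀-h) j + f (-(t₀-h)) j) - 2 * (f t₀ j + f (-t₀) j) with hΔdef
        have hΔsum : Summable Δ :=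
          ((hFsum (t₀+h)).add (hFsum (t₀-h))).sub ((hFsum t₀).mul_left 2)
        have habs1 : |t₀ + h| = t₀ + h := abs_of_pos (by linarith)
        have habs2 : |t₀ - h| = t₀ - h := abs_of_pos (by linarith)
        have habs3 : |t₀| = t₀ := abs_of_pos ht₀
        have hΔtsum : ∑' j, Δ j = 2*(1+(t₀+h)^q)^(p/q) + 2*(1+(t₀-h)^q)^(p/q)
            - 2*(2*(1+t₀^q)^(p/q)) := by
          rw [hΔdef]
          rw [Summable.tsum_sub ((hFsum (t₀+h)).add (hFsum (t₀-h))) ((hFsum t₀).mul_left 2)]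
          rw [Summable.tsum_add (hFsum (t₀+h)) (hFsum (t₀-h)), tsum_mul_left]
          rw [hF (t₀+h), hF (t₀-h), hF t₀, habs1, habs2, habs3]
        have hbracket : ∀ (u b : ℝ),
            0 ≤ |u + h*b| ^ p + |u - h*b| ^ p - 2 * |u| ^ p := by
          intro u b
          have := I1 hp u (h*b)
          linarith
        have hΔnonneg : ∀ j, 0 ≤ Δ j := by
          intro j
          have e1 : f (t₀+h) j = |(A j + t₀ * B j) + h * B j| ^ p := by
            rw [hfdef]; congr 1; congr 1; ring
          have e2 : f (t₀-h) j = |(A j + t₀ * B j) - h * B j| ^ p := by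
            rw [hfdef]; congr 1; congr 1; ring
          have e3 : f (-(t₀+h)) j = |(A j - t₀ * B j) - h * B j| ^ p := by
            rw [hfdef]; congr 1; congr 1; ring
          have e4 : f (-(t₀-h)) j = |(A j - t₀ * B j) + h * B j| ^ p := by
            rw [hfdef]; congr 1; congr 1; ring
          have e5 : f t₀ j = |A j + t₀ * B j| ^ p := rfl
          have e6 : f (-t₀) j = |A j - t₀ * B j| ^ p := by
            rw [hfdef]; congr 1; congr 1; ring
          have b1 := hbracket (A j + t₀ * B j) (B j)
          have b2 := hbracket (A j - t₀ * B j) (B j)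
          rw [hΔdef]
          simp only [e1, e2, e3, e4, e5, e6]
          linarith
        have hΔj0 : 2 * (h * |B j0|) ^ p ≤ Δ j0 := by
          have hz : A j0 + t₀ * B j0 = 0 ∨ A j0 - t₀ * B j0 = 0 := by
            rcases abs_cases (A j0 / B j0) with ⟨he, _⟩ | ⟨he, _⟩
            · right; rw [ht₀def, he]; field_simp; ring
            · left; rw [ht₀def, he]; field_simp; ring
          have e1 : f (t₀+h) j0 = |(A j0 + t₀ * B j0) + h * B j0| ^ p := by
            rw [hfdef]; congr 1; congr 1; ring
          have e2 : f (t₀-h) j0 = |(A j0 + t₀ * B j0) - h * B j0| ^ p := by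
            rw [hfdef]; congr 1; congr 1; ring
          have e3 : f (-(t₀+h)) j0 = |(A j0 - t₀ * B j0) - h * B j0| ^ p := by
            rw [hfdef]; congr 1; congr 1; ring
          have e4 : f (-(t₀-h)) j0 = |(A j0 - t₀ * B j0) + h * B j0| ^ p := by
            rw [hfdef]; congr 1; congr 1; ring
          have e5 : f t₀ j0 = |A j0 + t₀ * B j0| ^ p := rfl
          have e6 : f (-t₀) j0 = |A j0 - t₀ * B j0| ^ p := by
            rw [hfdef]; congr 1; congr 1; ring
          have hhB : |h * B j0| = h * |B j0| := by
            rw [abs_mul, abs_of_pos hh0]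
          rw [hΔdef]
          simp only [e1, e2, e3, e4, e5, e6]
          rcases hz with hz | hz
          · have b2 := hbracket (A j0 - t₀ * B j0) (B j0)
            rw [hz]
            simp only [zero_add, zero_sub, abs_neg, hhB, abs_zero]
            rw [Real.zero_rpow hp0.ne']
            linarith
          · have b1 := hbracket (A j0 + t₀ * B j0) (B j0)
            rw [hz]
            simp only [zero_add, zero_sub, abs_neg, hhB, abs_zero]
            rw [Real.zero_rpow hp0.ne']
            linarith
        have hle := Summable.le_tsum hΔsum j0 (fun j _ => hΔnonneg j)
        have hsm := hK h hh0.le hh1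
        -- combine
        have step1 : 2 * (h * |B j0|) ^ p ≤ 2 * K * h^2 := by
          have : ∑' j, Δ j ≤ 2 * (K * h^2) := by rw [hΔtsum]; linarith
          calc 2 * (h * |B j0|) ^ p ≤ Δ j0 := hΔj0
            _ ≤ ∑' j, Δ j := hle
            _ ≤ 2 * (K * h^2) := this
            _ = 2 * K * h^2 := by ring
        have hhp : (0:ℝ) < h ^ p := Real.rpow_pos_of_pos hh0 p
        have e7 : (h * |B j0|) ^ p = h ^ p * |B j0| ^ p :=
          Real.mul_rpow hh0.le (abs_nonneg _)
        have e8 : (h:ℝ)^2 = h ^ (2-p) * h ^ p := by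
          rw [← Real.rpow_add hh0, sub_add_cancel, ← Real.rpow_natCast h 2]
          norm_num
        rw [e7, e8] at step1
        have h9 : |B j0| ^ p * h ^ p ≤ (K * h ^ (2-p)) * h ^ p := by nlinarith
        exact le_of_mul_le_mul_right h9 hhp
      exact small_power (Real.rpow_pos_of_pos (abs_pos.2 hB0) p)
        (by linarith : (0:ℝ) < 2 - p) (by linarith : (0:ℝ) < t₀/2) main
    · -- p ≥ 2
      obtain ⟨C, hC, hI5⟩ := I5 hp2
      set D : ℕ → ℝ := fun j => B j ^ 2 * |A j| ^ (p - 2) with hDdef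
      set E : ℕ → ℝ := fun j => 2/p * |B j| ^ p + (p-2)/p * |A j| ^ p with hEdef
      have hDnn : ∀ j, 0 ≤ D j := fun j =>
        mul_nonneg (sq_nonneg _) (Real.rpow_nonneg (abs_nonneg _) _)
      have hDE : ∀ j, D j ≤ E j := by
        intro j
        have hg := Real.geom_mean_le_arith_mean2_weighted
          (w₁ := 2/p) (w₂ := (p-2)/p) (p₁ := |B j| ^ p) (p₂ := |A j| ^ p)
          (by positivity) (div_nonneg (by linarith) hp0.le)
          (Real.rpow_nonneg (abs_nonneg (B j)) p) (Real.rpow_nonneg (abs_nonneg (A j)) p)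
          (by field_simp; ring)
        have r1 : (|B j| ^ p) ^ (2/p) = B j ^ 2 := by
          rw [← Real.rpow_mul (abs_nonneg _)]
          rw [show p * (2/p) = 2 by field_simp]
          rw [show (2:ℝ) = ((2:ℕ):ℝ) by norm_num, Real.rpow_natCast, sq_abs]
        have r2 : (|A j| ^ p) ^ ((p-2)/p) = |A j| ^ (p - 2) := by
          rw [← Real.rpow_mul (abs_nonneg _)]
          rw [show p * ((p-2)/p) = p - 2 by field_simp]
        rw [r1, r2] at hg
        exact hg
      have SE : Summable E := (SB.mul_left _).add (SA.mul_left _)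
      have SD : Summable D := Summable.of_nonneg_of_le hDnn hDE SE
      have tE : ∑' j, E j = 1 := by
        rw [hEdef]
        rw [Summable.tsum_add (SB.mul_left _) (SA.mul_left _), tsum_mul_left, tsum_mul_left, tA, tB]
        field_simp
        ring
      have tD : ∑' j, D j ≤ 1 := (Summable.tsum_le_tsum hDE SD SE).trans_eq tE
      have tDnn : 0 ≤ ∑' j, D j := tsum_nonneg hDnn
      rcases hq2.lt_or_gt with hql | hqg
      · -- q < 2 ≤ p
        have main : ∀ h : ℝ, 0 < h → h ≤ 1 → (2:ℝ) ≤ (2*(C+2)) * h ^ (2-q) := by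
          intro h hh0 hh1
          have hterm : ∀ j, (f h j + f (-h) j) - 2*|A j| ^ p
              ≤ (C+2) * (h^2 * D j + h ^ p * |B j| ^ p) := by
            intro j
            by_cases hA : A j = 0
            · have e1 : f h j = h ^ p * |B j| ^ p := by
                rw [hfdef]
                simp only [hA, zero_add]
                rw [abs_mul, Real.mul_rpow (abs_nonneg _) (abs_nonneg _),
                  abs_of_pos hh0]
              have e2 : f (-h) j = h ^ p * |B j| ^ p := by
                rw [hfdef]
                simp only [hA, zero_add, neg_mul, abs_neg]
                rw [abs_mul, Real.mul_rpow (abs_nonneg _) (abs_nonneg _),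
                  abs_of_pos hh0]
              have hD0 : 0 ≤ h^2 * D j := mul_nonneg (sq_nonneg h) (hDnn j)
              have hB0' : 0 ≤ h ^ p * |B j| ^ p :=
                mul_nonneg (Real.rpow_pos_of_pos hh0 p).le (Real.rpow_nonneg (abs_nonneg _) _)
              rw [e1, e2, hA]
              simp only [abs_zero, Real.zero_rpow hp0.ne']
              nlinarith
            · have hAp : (0:ℝ) < |A j| := abs_pos.2 hA
              set w : ℝ := h * B j / A j with hwdef
              have inner1 : A j + h * B j = A j * (1 + w) := by
                rw [hwdef]; field_simp
              have inner2 : A j + (-h) * B j = A j * (1 - w) := by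
                rw [hwdef]; field_simp; ring
              have e1 : f h j = |A j| ^ p * |1 + w| ^ p := by
                rw [hfdef]
                simp only []
                rw [inner1, abs_mul, Real.mul_rpow (abs_nonneg _) (abs_nonneg _)]
              have e2 : f (-h) j = |A j| ^ p * |1 - w| ^ p := by
                rw [hfdef]
                simp only []
                rw [inner2, abs_mul, Real.mul_rpow (abs_nonneg _) (abs_nonneg _)]
              have hw := hI5 w
              have hmul := mul_le_mul_of_nonneg_left hw (Real.rpow_nonneg (abs_nonneg (A j)) p)
              have r1 : |A j| ^ (p-2) * |A j| ^ (2:ℝ) = |A j| ^ p := by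
                rw [← Real.rpow_add hAp]; norm_num
              have r2 : |A j| ^ (2:ℝ) = A j ^ 2 := by
                rw [show (2:ℝ) = ((2:ℕ):ℝ) by norm_num, Real.rpow_natCast, sq_abs]
              have e3 : |A j| ^ p * w^2 = h^2 * D j := by
                rw [← r1, r2, hDdef, hwdef]
                field_simp
              have e4 : |A j| ^ p * |w| ^ p = h ^ p * |B j| ^ p := by
                rw [← Real.mul_rpow (abs_nonneg _) (abs_nonneg _), ← abs_mul, hwdef]
                rw [show A j * (h * B j / A j) = h * B j by field_simp]
                rw [abs_mul, abs_of_pos hh0, Real.mul_rpow hh0.le (abs_nonneg _)]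
              have hterm2 : f h j + f (-h) j ≤ 2 * |A j| ^ p + C * (h^2 * D j + h ^ p * |B j| ^ p) := by
                rw [e1, e2]
                calc |A j| ^ p * |1 + w| ^ p + |A j| ^ p * |1 - w| ^ p
                    = |A j| ^ p * (|1 + w| ^ p + |1 - w| ^ p) := by ring
                  _ ≤ |A j| ^ p * (2 + C * (w^2 + |w| ^ p)) := hmul
                  _ = 2 * |A j| ^ p + C * (|A j| ^ p * w^2 + |A j| ^ p * |w| ^ p) := by ring
                  _ = 2 * |A j| ^ p + C * (h^2 * D j + h ^ p * |B j| ^ p) := by rw [e3, e4]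
              have hD0 : 0 ≤ h^2 * D j := mul_nonneg (sq_nonneg h) (hDnn j)
              have hB0' : 0 ≤ h ^ p * |B j| ^ p :=
                mul_nonneg (Real.rpow_pos_of_pos hh0 p).le (Real.rpow_nonneg (abs_nonneg _) _)
              nlinarith
          have Ssub : Summable (fun j => (f h j + f (-h) j) - 2*|A j| ^ p) :=
            (hFsum h).sub (SA.mul_left 2)
          have Srhs : Summable (fun j => (C+2) * (h^2 * D j + h ^ p * |B j| ^ p)) :=
            ((SD.mul_left (h^2)).add (SB.mul_left (h ^ p))).mul_left (C+2)
          have tL : ∑' j, ((f h j + f (-h) j) - 2*|A j| ^ p)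
              = 2 * (1 + h ^ q) ^ (p/q) - 2 := by
            rw [Summable.tsum_sub (hFsum h) (SA.mul_left 2), tsum_mul_left, tA, hF h,
              abs_of_pos hh0]
            ring
          have tR : ∑' j, (C+2) * (h^2 * D j + h ^ p * |B j| ^ p)
              = (C+2) * (h^2 * (∑' j, D j) + h ^ p) := by
            rw [tsum_mul_left, Summable.tsum_add (SD.mul_left (h^2)) (SB.mul_left (h ^ p)),
              tsum_mul_left, tsum_mul_left, tB, mul_one]
          have hcomb : 2 * (1 + h ^ q) ^ (p/q) - 2 ≤ (C+2) * (h^2 * (∑' j, D j) + h ^ p) := by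
            rw [← tL, ← tR]
            exact Summable.tsum_le_tsum hterm Ssub Srhs
          -- lower bound via Bernoulli
          have hpq1 : 1 ≤ p / q := (one_le_div hq0).2 (by linarith)
          have hhq : (0:ℝ) ≤ h ^ q := Real.rpow_nonneg hh0.le q
          have hbern := one_add_mul_self_le_rpow_one_add (by linarith : (-1:ℝ) ≤ h ^ q) hpq1
          have hlow : 2 * h ^ q ≤ 2 * (1 + h ^ q) ^ (p/q) - 2 := by nlinarith
          -- h^p ≤ h^2
          have hh2 : h ^ p ≤ h ^ (2:ℝ) :=
            Real.rpow_le_rpow_of_exponent_ge hh0 hh1 hp2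
          have hh2' : h ^ (2:ℝ) = h^2 := by
            rw [show (2:ℝ) = ((2:ℕ):ℝ) by norm_num, Real.rpow_natCast]
          rw [hh2'] at hh2
          have hup : (C+2) * (h^2 * (∑' j, D j) + h ^ p) ≤ (2*(C+2)) * h^2 := by
            have h1 : h^2 * (∑' j, D j) ≤ h^2 := by nlinarith [sq_nonneg h]
            nlinarith [sq_nonneg h]
          have hfin : 2 * h ^ q ≤ (2*(C+2)) * h^2 := by linarith
          have e8 : (h:ℝ)^2 = h ^ (2-q) * h ^ q := by
            rw [← Real.rpow_add hh0, sub_add_cancel, ← Real.rpow_natCast h 2]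
            norm_num
          rw [e8] at hfin
          have hhq0 : (0:ℝ) < h ^ q := Real.rpow_pos_of_pos hh0 q
          have h9 : 2 * h ^ q ≤ ((2*(C+2)) * h ^ (2-q)) * h ^ q := by nlinarith
          have h10 : (2:ℝ) * h ^ q = (2:ℝ) * h ^ q := rfl
          exact le_of_mul_le_mul_right h9 hhq0
        exact small_power (by norm_num : (0:ℝ) < 2) (by linarith : (0:ℝ) < 2 - q)
          one_pos main
      · -- q > 2
        set c : ℝ := p * (A j0 ^ 2) ^ (p/2 - 1) * B j0 ^ 2 with hcdef
        have hA2 : (0:ℝ) < A j0 ^ 2 := by positivity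
        have hB2 : (0:ℝ) < B j0 ^ 2 := by positivity
        have hcpos : 0 < c := by
          have := Real.rpow_pos_of_pos hA2 (p/2 - 1)
          rw [hcdef]; positivity
        set r : ℝ := max (p/q) 1 with hrdef
        have hr1 : 1 ≤ r := le_max_right _ _
        have h2r : (0:ℝ) < 2 ^ r - 1 := by
          have : (2:ℝ) ^ (0:ℝ) < 2 ^ r := Real.rpow_lt_rpow_of_exponent_lt
            (by norm_num) (by linarith)
          rw [Real.rpow_zero] at this
          linarith
        have main : ∀ h : ℝ, 0 < h → h ≤ 1 → c ≤ (2*(2 ^ r - 1)) * h ^ (q-2) := by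
          intro h hh0 hh1
          -- termwise nonneg and j0 lower bound
          have hterm : ∀ j, 0 ≤ (f h j + f (-h) j) - 2*|A j| ^ p := by
            intro j
            have inner2 : A j + (-h) * B j = A j - h * B j := by ring
            have hI2 := I2 hp2 (A j) (h * B j)
            have e1 : f h j = |A j + h * B j| ^ p := rfl
            have e2 : f (-h) j = |A j - h * B j| ^ p := by
              rw [hfdef]; simp only []; rw [inner2]
            have mono : (A j ^ 2) ^ (p/2) ≤ (A j ^ 2 + (h * B j) ^ 2) ^ (p/2) :=
              Real.rpow_le_rpow (sq_nonneg _) (by nlinarith [sq_nonneg (h * B j)])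
                (by linarith)
            have habs : (A j ^ 2) ^ (p/2) = |A j| ^ p := sq_rpow_half _ _
            rw [e1, e2]
            linarith
          have hj0 : c * h ^ 2 ≤ (f h j0 + f (-h) j0) - 2*|A j0| ^ p := by
            have inner2 : A j0 + (-h) * B j0 = A j0 - h * B j0 := by ring
            have hI2 := I2 hp2 (A j0) (h * B j0)
            have e2 : f (-h) j0 = |A j0 - h * B j0| ^ p := by
              rw [hfdef]; simp only []; rw [inner2]
            have e1 : f h j0 = |A j0 + h * B j0| ^ p := rfl
            have hI3 := I3 (by linarith : 1 ≤ p/2) hA2 (sq_nonneg (h * B j0))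
            have habs : (A j0 ^ 2) ^ (p/2) = |A j0| ^ p := sq_rpow_half _ _
            have e3 : p/2 * (A j0 ^ 2) ^ (p/2 - 1) * (h * B j0) ^ 2
                = c * h ^ 2 / 2 := by
              rw [hcdef]; ring
            rw [e1, e2]
            nlinarith
          have Ssub : Summable (fun j => (f h j + f (-h) j) - 2*|A j| ^ p) :=
            (hFsum h).sub (SA.mul_left 2)
          have tL : ∑' j, ((f h j + f (-h) j) - 2*|A j| ^ p)
              = 2 * (1 + h ^ q) ^ (p/q) - 2 := by
            rw [Summable.tsum_sub (hFsum h) (SA.mul_left 2), tsum_mul_left, tA, hF h,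
              abs_of_pos hh0]
            ring
          have hle := Summable.le_tsum Ssub j0 (fun j _ => hterm j)
          have hupp : 2 * (1 + h ^ q) ^ (p/q) - 2 ≤ 2 * (2 ^ r - 1) * h ^ q := by
            have hhq : (0:ℝ) ≤ h ^ q := Real.rpow_nonneg hh0.le q
            have hhq1 : h ^ q ≤ 1 := Real.rpow_le_one hh0.le hh1 hq0.le
            have s1 : (1 + h ^ q) ^ (p/q) ≤ (1 + h ^ q) ^ r :=
              Real.rpow_le_rpow_of_exponent_le (by linarith) (le_max_left _ _)
            have s2 : (1 + h ^ q) ^ r ≤ 1 + (2 ^ r - 1) * h ^ q := I4 hr1 hhq hhq1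
            linarith
          have step : c * h ^ 2 ≤ 2 * (2 ^ r - 1) * h ^ q := by
            calc c * h ^ 2 ≤ (f h j0 + f (-h) j0) - 2*|A j0| ^ p := hj0
              _ ≤ ∑' j, ((f h j + f (-h) j) - 2*|A j| ^ p) := hle
              _ = 2 * (1 + h ^ q) ^ (p/q) - 2 := tL
              _ ≤ 2 * (2 ^ r - 1) * h ^ q := hupp
          have e8 : h ^ q = h ^ (q-2) * h ^ 2 := by
            rw [← Real.rpow_natCast h 2, ← Real.rpow_add hh0]
            norm_num
          rw [e8] at step
          have hh2 : (0:ℝ) < h ^ 2 := by positivity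
          have h9 : c * h ^ 2 ≤ ((2*(2 ^ r - 1)) * h ^ (q-2)) * h ^ 2 := by nlinarith
          exact le_of_mul_le_mul_right h9 hh2
        exact small_power hcpos (by linarith : (0:ℝ) < q - 2) one_pos main

/-- For `n ≥ 2`, `p, q ≥ 1`, `q ≠ 2` and `p ≠ q`, the space `ℓ_q^n` does not
embed linearly isometrically into `ℓ_p`. -/


theorem lqn_not_embeds_lp
    (n : ℕ) (hn : 2 ≤ n) (p q : ℝ) (hp : 1 ≤ p) (hq : 1 ≤ q)
    (hq2 : q ≠ 2) (hpq : p ≠ q) :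
    ¬ ∃ T : (EuclideanSpace ℝ (Fin n)) →ₗ[ℝ] (ℕ → ℝ),
      ∀ x : EuclideanSpace ℝ (Fin n),
        Summable (fun j => |T x j| ^ p) ∧
        ∑' j, |T x j| ^ p = ((∑ i, |x i| ^ q) ^ (1 / q)) ^ p := by
  rintro ⟨T, hT⟩
  have hq0 : (0:ℝ) < q := by linarith
  set i0 : Fin n := ⟨0, by omega⟩ with hi0
  set i1 : Fin n := ⟨1, by omega⟩ with hi1
  have hine : i1 ≠ i0 := by
    simp [hi0, hi1, Fin.ext_iff]
  have hine' : i0 ≠ i1 := hine.symm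
  set E0 : EuclideanSpace ℝ (Fin n) := EuclideanSpace.single i0 (1:ℝ) with hE0
  set E1 : EuclideanSpace ℝ (Fin n) := EuclideanSpace.single i1 (1:ℝ) with hE1
  set A : ℕ → ℝ := fun j => T E0 j with hA
  set B : ℕ → ℝ := fun j => T E1 j with hB
  have key : ∀ s t : ℝ, Summable (fun j => |s * A j + t * B j| ^ p) ∧
      ∑' j, |s * A j + t * B j| ^ p = (|s| ^ q + |t| ^ q) ^ (p / q) := by
    intro s t
    have hx := hT (s • E0 + t • E1)
    have hTx : ∀ j, T (s • E0 + t • E1) j = s * A j + t * B j := by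
      intro j
      rw [map_add, map_smul, map_smul]
      simp [hA, hB]
    have hcoord : ∀ i : Fin n, (s • E0 + t • E1) i =
        (if i = i0 then s else 0) + (if i = i1 then t else 0) := by
      intro i
      simp only [hE0, hE1, PiLp.add_apply, PiLp.smul_apply, EuclideanSpace.single_apply,
        smul_eq_mul]
      by_cases h0 : i = i0 <;> by_cases h1 : i = i1 <;> simp [h0, h1]
    have hnorm : ∑ i, |(s • E0 + t • E1) i| ^ q = |s| ^ q + |t| ^ q := by
      have e : ∀ i : Fin n, |(s • E0 + t • E1) i| ^ q =
          (if i = i0 then |s| ^ q else 0) + (if i = i1 then |t| ^ q else 0) := by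
        intro i
        rw [hcoord i]
        by_cases h0 : i = i0 <;> by_cases h1 : i = i1
        · exact absurd (h0.symm.trans h1) hine'
        · simp [h0, h1, hine']
        · simp [h0, h1, hine]
        · simp [h0, h1, Real.zero_rpow hq0.ne']
      rw [Finset.sum_congr rfl (fun i _ => e i), Finset.sum_add_distrib,
        Finset.sum_ite_eq' Finset.univ i0, Finset.sum_ite_eq' Finset.univ i1]
      simp
    have hrhs : ((∑ i, |(s • E0 + t • E1) i| ^ q) ^ (1 / q)) ^ p
        = (|s| ^ q + |t| ^ q) ^ (p / q) := by
      rw [hnorm, ← Real.rpow_mul (by positivity)]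
      rw [show 1/q*p = p/q by ring]
    constructor
    · have := hx.1
      simpa only [hTx] using this
    · have := hx.2
      rw [hrhs] at this
      simpa only [hTx] using this
  exact main_abstract hp hq hq2 hpq A B (fun s t => (key s t).1) (fun s t => (key s t).2)
end

section
/- Assume n ≥ 2 and p ≥ 1 is not an even integer. Then ℓ_2^n does not embed linearly isometrically into ℓ_p. -/
open scoped BigOperators
open Real

open MeasureTheory intervalIntegral
open scoped RealInnerProductSpace


noncomputable def II (p b : ℝ) : ℝ := ∫ x in (0:ℝ)..(π/2), (Real.cos x) ^ p * Real.cos (b*x)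

lemma cont_aux (p b : ℝ) (hp0 : 0 ≤ p) : Continuous fun x : ℝ => (Real.cos x) ^ p * Real.cos (b*x) := by
  apply Continuous.mul
  · exact Real.continuous_cos.rpow_const (fun x => Or.inr hp0)
  · exact Real.continuous_cos.comp (continuous_const.mul continuous_id)

lemma II_rec (p : ℝ) (hp0 : 0 ≤ p) (b : ℝ) :
    (b - (p+1))/2 * II p (b-1) + (b + (p+1))/2 * II p (b+1) = 0 := by
  have hder : ∀ x ∈ Set.uIcc (0:ℝ) (π/2),
      HasDerivAt (fun x => (Real.cos x) ^ (p+1) * Real.sin (b*x))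
        ((b - (p+1))/2 * ((Real.cos x) ^ p * Real.cos ((b-1)*x))
          + (b + (p+1))/2 * ((Real.cos x) ^ p * Real.cos ((b+1)*x))) x := by
    intro x _
    have h1 : HasDerivAt (fun x : ℝ => (Real.cos x) ^ (p+1))
        (((p+1) * (Real.cos x) ^ (p+1-1)) * (-Real.sin x)) x :=
      (Real.hasDerivAt_rpow_const (Or.inr (by linarith))).comp x (Real.hasDerivAt_cos x)
    have h2 : HasDerivAt (fun x : ℝ => Real.sin (b*x)) (Real.cos (b*x) * b) x := by
      simpa [Function.comp_def] using (Real.hasDerivAt_sin (b*x)).comp x ((hasDerivAt_id x).const_mul b)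
    have h3 := h1.mul h2
    refine h3.congr_deriv ?_
    have hc : (Real.cos x) ^ (p+1) = (Real.cos x) ^ p * Real.cos x := by
      rcases eq_or_ne (Real.cos x) 0 with h|h
      · simp [h, Real.zero_rpow (by linarith : p+1 ≠ 0)]
      · exact Real.rpow_add_one h p
    have e1 : (b-1)*x = b*x - x := by ring
    have e2 : (b+1)*x = b*x + x := by ring
    have e0 : p + 1 - 1 = p := by ring
    rw [e0, hc, e1, e2, Real.cos_sub, Real.cos_add]
    ring
  have hint : IntervalIntegrable (fun x =>
      (b - (p+1))/2 * ((Real.cos x) ^ p * Real.cos ((b-1)*x))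
        + (b + (p+1))/2 * ((Real.cos x) ^ p * Real.cos ((b+1)*x))) volume 0 (π/2) := by
    exact ((continuous_const.mul (cont_aux p (b-1) hp0)).add (continuous_const.mul (cont_aux p (b+1) hp0))).intervalIntegrable _ _
  have := integral_eq_sub_of_hasDerivAt hder hint
  rw [Real.cos_pi_div_two, Real.zero_rpow (by linarith : p+1 ≠ 0)] at this
  simp only [zero_mul, mul_zero, Real.sin_zero, sub_zero, zero_sub] at this
  rw [integral_add (f := fun x => (b - (p+1))/2 * ((Real.cos x) ^ p * Real.cos ((b-1)*x)))
      (g := fun x => (b + (p+1))/2 * ((Real.cos x) ^ p * Real.cos ((b+1)*x)))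
      ((continuous_const.mul (cont_aux p (b-1) hp0)).intervalIntegrable _ _)
      ((continuous_const.mul (cont_aux p (b+1) hp0)).intervalIntegrable _ _),
    intervalIntegral.integral_const_mul, intervalIntegral.integral_const_mul] at this
  unfold II
  linarith [this]


lemma II_zero_pos (p : ℝ) (hp0 : 0 ≤ p) : 0 < II p 0 := by
  apply intervalIntegral_pos_of_pos_on ((cont_aux p 0 hp0).intervalIntegrable _ _)
  · intro x hx
    have hc : 0 < Real.cos x := Real.cos_pos_of_mem_Ioo ⟨by linarith [hx.1, Real.pi_pos], hx.2⟩
    have : (0:ℝ) < (Real.cos x) ^ p := Real.rpow_pos_of_pos hc p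
    simpa using this
  · positivity

lemma II_even_ne (p : ℝ) (hp1 : 1 ≤ p) (hpe : ¬ ∃ k : ℕ, p = 2 * k) (k : ℕ) :
    II p (2*k) ≠ 0 := by
  induction k with
  | zero => simpa using (II_zero_pos p (by linarith)).ne'
  | succ k ih =>
    have hrec := II_rec p (by linarith) (2*k+1)
    have e1 : (2*(k:ℝ)+1) - 1 = 2*k := by ring
    have e2 : (2*(k:ℝ)+1) + 1 = 2*(k+1:ℕ) := by push_cast; ring
    rw [e1, e2] at hrec
    have hne1 : (2*(k:ℝ)+1 - (p+1))/2 ≠ 0 := by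
      intro h
      apply hpe
      exact ⟨k, by linarith [(div_eq_zero_iff.mp h).resolve_right (by norm_num)]⟩
    have hne2 : (2*(k:ℝ)+1 + (p+1))/2 ≠ 0 := by positivity
    intro h
    rw [h, mul_zero, add_zero, mul_eq_zero] at hrec
    exact ih (hrec.resolve_left hne1)


variable {p : ℝ}

lemma contA (hp0 : 0 ≤ p) : Continuous fun θ : ℝ => |Real.cos θ| ^ p :=
  (continuous_abs.comp Real.continuous_cos).rpow_const (fun _ => Or.inr hp0)

lemma contA' (hp0 : 0 ≤ p) (c d : ℝ) (g : ℝ → ℝ) (hg : Continuous g) :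
    Continuous fun θ : ℝ => |Real.cos (θ - d)| ^ p * g (c * θ) :=
  (((continuous_abs.comp (Real.continuous_cos.comp (continuous_id.sub continuous_const))).rpow_const
    (fun _ => Or.inr hp0))).mul (hg.comp (continuous_const.mul continuous_id))

-- ∫_0^{2π} |cos θ|^p sin (2kθ) dθ = 0
lemma GS_eq_zero (hp0 : 0 ≤ p) (k : ℕ) :
    ∫ θ in (0:ℝ)..(2*π), |Real.cos θ| ^ p * Real.sin (2*k*θ) = 0 := by
  set g : ℝ → ℝ := fun θ => |Real.cos θ| ^ p * Real.sin (2*k*θ) with hg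
  have hper : Function.Periodic g (2*π) := by
    intro θ
    simp only [hg]
    have h1 : |Real.cos (θ + 2*π)| = |Real.cos θ| := by rw [Real.cos_add_two_pi]
    have h2 : Real.sin (2*k*(θ + 2*π)) = Real.sin (2*k*θ) := by
      have : 2*(k:ℝ)*(θ + 2*π) = 2*k*θ + ((2*k:ℕ):ℤ)*(2*π) := by push_cast; ring
      rw [this, Real.sin_add_int_mul_two_pi]
    rw [h1, h2]
  have hshift : ∫ θ in (0:ℝ)..(2*π), g θ = ∫ θ in (-π)..π, g θ := by
    have := hper.intervalIntegral_add_eq (0:ℝ) (-π)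
    rw [zero_add] at this
    rw [this]
    congr 1
    ring
  have hodd : ∀ θ, g (-θ) = - g θ := by
    intro θ
    simp only [hg]
    rw [Real.cos_neg]
    have : 2*(k:ℝ)*(-θ) = -(2*k*θ) := by ring
    rw [this, Real.sin_neg]
    ring
  have hneg : ∫ θ in (-π)..π, g (-θ) = ∫ θ in (-π)..π, g θ := by
    rw [integral_comp_neg]
    norm_num
  have : ∫ θ in (-π)..π, g θ = - ∫ θ in (-π)..π, g θ := by
    nth_rewrite 1 [← hneg]
    rw [← intervalIntegral.integral_neg]
    exact integral_congr (fun θ _ => hodd θ)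
  rw [hshift]
  linarith
-- ∫_0^{2π} |cos θ|^p cos (2kθ) dθ = 4 II p (2k)
lemma GC_eq (hp0 : 0 ≤ p) (k : ℕ) :
    ∫ θ in (0:ℝ)..(2*π), |Real.cos θ| ^ p * Real.cos (2*k*θ) = 4 * II p (2*k) := by
  set g : ℝ → ℝ := fun θ => |Real.cos θ| ^ p * Real.cos (2*k*θ) with hg
  have hcont : Continuous g := contA' hp0 (2*k) 0 Real.cos Real.continuous_cos |>.congr (by
    intro θ; simp [hg])
  have hper : Function.Periodic g π := by
    intro θ
    simp only [hg]
    have h1 : |Real.cos (θ + π)| = |Real.cos θ| := by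
      rw [Real.cos_add_pi, abs_neg]
    have h2 : Real.cos (2*k*(θ + π)) = Real.cos (2*k*θ) := by
      have : 2*(k:ℝ)*(θ + π) = 2*k*θ + (k:ℤ)*(2*π) := by push_cast; ring
      rw [this, Real.cos_add_int_mul_two_pi]
    rw [h1, h2]
  have hsplit : ∫ θ in (0:ℝ)..(2*π), g θ = (∫ θ in (0:ℝ)..π, g θ) + ∫ θ in (π:ℝ)..(2*π), g θ := by
    rw [integral_add_adjacent_intervals (hcont.intervalIntegrable _ _) (hcont.intervalIntegrable _ _)]
  have hsecond : ∫ θ in (π:ℝ)..(2*π), g θ = ∫ θ in (0:ℝ)..π, g θ := by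
    have := hper.intervalIntegral_add_eq (π:ℝ) 0
    rw [zero_add] at this
    have h2 : π + π = 2*π := by ring
    rw [h2] at this
    rw [this]
  have hhalf : ∫ θ in (0:ℝ)..π, g θ = (∫ θ in (0:ℝ)..(π/2), g θ) + ∫ θ in (π/2:ℝ)..π, g θ := by
    rw [integral_add_adjacent_intervals (hcont.intervalIntegrable _ _) (hcont.intervalIntegrable _ _)]
  have hrefl : ∫ θ in (π/2:ℝ)..π, g θ = ∫ θ in (0:ℝ)..(π/2), g θ := by
    have := integral_comp_sub_left (a := (0:ℝ)) (b := π/2) g π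
    rw [sub_zero] at this
    have h2 : π - π/2 = π/2 := by ring
    rw [h2] at this
    rw [← this]
    apply integral_congr
    intro θ _
    simp only [hg]
    have h1 : |Real.cos (π - θ)| = |Real.cos θ| := by rw [Real.cos_pi_sub, abs_neg]
    have h2 : Real.cos (2*k*(π - θ)) = Real.cos (2*k*θ) := by
      have e : 2*(k:ℝ)*(π - θ) = -(2*k*θ) + (k:ℤ)*(2*π) := by push_cast; ring
      rw [e, Real.cos_add_int_mul_two_pi, Real.cos_neg]
    rw [h1, h2]
  have hquarter : ∫ θ in (0:ℝ)..(π/2), g θ = II p (2*k) := by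
    unfold II
    apply integral_congr
    intro θ hθ
    rw [Set.uIcc_of_le (by positivity : (0:ℝ) ≤ π/2)] at hθ
    have hc : 0 ≤ Real.cos θ := Real.cos_nonneg_of_mem_Icc ⟨by linarith [hθ.1, Real.pi_pos], by linarith [hθ.2]⟩
    simp only [hg, abs_of_nonneg hc]
  rw [hsplit, hsecond, hhalf, hrefl, hquarter]
  ring


variable {p : ℝ}

-- generic shift computation
lemma shift_aux (hp0 : 0 ≤ p) (k : ℕ) (α : ℝ) (tr : ℝ → ℝ) (htr : Continuous tr)
    (hper : ∀ u, tr (2*k*(u + 2*π)) = tr (2*k*u)) :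
    ∫ θ in (0:ℝ)..(2*π), |Real.cos (θ - α)| ^ p * tr (2*k*θ)
      = ∫ u in (0:ℝ)..(2*π), |Real.cos u| ^ p * tr (2*k*(u + α)) := by
  set g : ℝ → ℝ := fun u => |Real.cos u| ^ p * tr (2*k*(u + α)) with hgdef
  have h1 : ∀ θ : ℝ, |Real.cos (θ - α)| ^ p * tr (2*k*θ) = g (θ - α) := by
    intro θ; simp only [hgdef, sub_add_cancel]
  have h2 : (∫ θ in (0:ℝ)..(2*π), |Real.cos (θ - α)| ^ p * tr (2*k*θ))
      = ∫ θ in (0:ℝ)..(2*π), g (θ - α) := integral_congr (fun θ _ => h1 θ)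
  rw [h2, integral_comp_sub_right g α]
  have hperg : Function.Periodic g (2*π) := by
    intro u
    simp only [hgdef]
    have e1 : |Real.cos (u + 2*π)| = |Real.cos u| := by rw [Real.cos_add_two_pi]
    have e2 : tr (2*k*(u + 2*π + α)) = tr (2*k*(u + α)) := by
      have e : u + 2*π + α = (u + α) + 2*π := by ring
      rw [e, hper]
    rw [e1, e2]
  have := hperg.intervalIntegral_add_eq (0 - α) 0
  rw [zero_add] at this
  have e : 0 - α + 2*π = 2*π - α := by ring
  rw [e] at this
  rw [this]

lemma CC_eq (hp0 : 0 ≤ p) (k : ℕ) (α : ℝ) :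
    ∫ θ in (0:ℝ)..(2*π), |Real.cos (θ - α)| ^ p * Real.cos (2*k*θ)
      = Real.cos (2*k*α) * (4 * II p (2*k)) := by
  rw [shift_aux hp0 k α Real.cos Real.continuous_cos (fun u => by
    have e : 2*(k:ℝ)*(u + 2*π) = 2*k*u + ((2*k:ℕ):ℤ)*(2*π) := by push_cast; ring
    rw [e, Real.cos_add_int_mul_two_pi])]
  have hsplit : ∀ u : ℝ, |Real.cos u| ^ p * Real.cos (2*k*(u + α))
      = Real.cos (2*k*α) * (|Real.cos u| ^ p * Real.cos (2*k*u))
        - Real.sin (2*k*α) * (|Real.cos u| ^ p * Real.sin (2*k*u)) := by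
    intro u
    have e : 2*(k:ℝ)*(u + α) = 2*k*u + 2*k*α := by ring
    rw [e, Real.cos_add]
    ring
  rw [integral_congr (fun u _ => hsplit u)]
  rw [integral_sub (f := fun x => Real.cos (2*k*α) * (|Real.cos x| ^ p * Real.cos (2*k*x)))
      (g := fun x => Real.sin (2*k*α) * (|Real.cos x| ^ p * Real.sin (2*k*x)))
      ((continuous_const.mul ((contA' hp0 (2*k) 0 Real.cos Real.continuous_cos).congr (by intro θ; simp))).intervalIntegrable _ _)
      ((continuous_const.mul ((contA' hp0 (2*k) 0 Real.sin Real.continuous_sin).congr (by intro θ; simp))).intervalIntegrable _ _),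
    intervalIntegral.integral_const_mul, intervalIntegral.integral_const_mul, GC_eq hp0 k, GS_eq_zero hp0 k]
  ring

lemma CS_eq (hp0 : 0 ≤ p) (k : ℕ) (α : ℝ) :
    ∫ θ in (0:ℝ)..(2*π), |Real.cos (θ - α)| ^ p * Real.sin (2*k*θ)
      = Real.sin (2*k*α) * (4 * II p (2*k)) := by
  rw [shift_aux hp0 k α Real.sin Real.continuous_sin (fun u => by
    have e : 2*(k:ℝ)*(u + 2*π) = 2*k*u + ((2*k:ℕ):ℤ)*(2*π) := by push_cast; ring
    rw [e, Real.sin_add_int_mul_two_pi])]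
  have hsplit : ∀ u : ℝ, |Real.cos u| ^ p * Real.sin (2*k*(u + α))
      = Real.sin (2*k*α) * (|Real.cos u| ^ p * Real.cos (2*k*u))
        + Real.cos (2*k*α) * (|Real.cos u| ^ p * Real.sin (2*k*u)) := by
    intro u
    have e : 2*(k:ℝ)*(u + α) = 2*k*u + 2*k*α := by ring
    rw [e, Real.sin_add]
    ring
  rw [integral_congr (fun u _ => hsplit u)]
  rw [integral_add (f := fun x => Real.sin (2*k*α) * (|Real.cos x| ^ p * Real.cos (2*k*x)))
      (g := fun x => Real.cos (2*k*α) * (|Real.cos x| ^ p * Real.sin (2*k*x)))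
      ((continuous_const.mul ((contA' hp0 (2*k) 0 Real.cos Real.continuous_cos).congr (by intro θ; simp))).intervalIntegrable _ _)
      ((continuous_const.mul ((contA' hp0 (2*k) 0 Real.sin Real.continuous_sin).congr (by intro θ; simp))).intervalIntegrable _ _),
    intervalIntegral.integral_const_mul, intervalIntegral.integral_const_mul, GC_eq hp0 k, GS_eq_zero hp0 k]
  ring

variable {p : ℝ}

-- interchange of tsum and interval integral for our setting
lemma interchange (hp0 : 0 ≤ p) (c : ℕ → ℝ) (hc : ∀ j, 0 ≤ c j) (hcs : Summable c)
    (α : ℕ → ℝ) (tr : ℝ → ℝ) (htr : Continuous tr) (htrb : ∀ θ, |tr θ| ≤ 1) (k : ℕ) :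
    ∫ θ in (0:ℝ)..(2*π), (∑' j, c j * |Real.cos (θ - α j)| ^ p) * tr (2*k*θ)
      = ∑' j, c j * ∫ θ in (0:ℝ)..(2*π), |Real.cos (θ - α j)| ^ p * tr (2*k*θ) := by
  have h2π : (0:ℝ) ≤ 2*π := by positivity
  set f : ℕ → ℝ → ℝ := fun j θ => c j * (|Real.cos (θ - α j)| ^ p * tr (2*k*θ)) with hf
  have hfc : ∀ j, Continuous (f j) := by
    intro j
    apply continuous_const.mul
    apply Continuous.mul
    · exact ((continuous_abs.comp (Real.continuous_cos.comp
        (continuous_id.sub continuous_const))).rpow_const (fun _ => Or.inr hp0))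
    · exact htr.comp (continuous_const.mul continuous_id)
  have hbound : ∀ j θ, |f j θ| ≤ c j := by
    intro j θ
    have h1 : |Real.cos (θ - α j)| ^ p ≤ 1 := by
      apply Real.rpow_le_one (abs_nonneg _) (abs_cos_le_one _) hp0
    have h2 : 0 ≤ |Real.cos (θ - α j)| ^ p := Real.rpow_nonneg (abs_nonneg _) _
    rw [hf]
    simp only [abs_mul, abs_of_nonneg (hc j), abs_of_nonneg h2]
    calc c j * (|Real.cos (θ - α j)| ^ p * |tr (2*k*θ)|)
        ≤ c j * (1 * 1) := by
          apply mul_le_mul_of_nonneg_left _ (hc j)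
          exact mul_le_mul h1 (htrb _) (abs_nonneg _) zero_le_one
      _ = c j := by ring
  have key : ∫ θ in Set.Ioc (0:ℝ) (2*π), (∑' j, f j θ) ∂volume
      = ∑' j, ∫ θ in Set.Ioc (0:ℝ) (2*π), f j θ ∂volume := by
    apply integral_tsum
    · intro j
      exact (hfc j).aestronglyMeasurable
    · apply ne_top_of_le_ne_top (b := ∑' j, ENNReal.ofReal (c j) * ENNReal.ofReal (2*π))
      · rw [ENNReal.tsum_mul_right]
        apply ENNReal.mul_ne_top _ ENNReal.ofReal_ne_top
        rw [← ENNReal.ofReal_tsum_of_nonneg hc hcs]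
        exact ENNReal.ofReal_ne_top
      · apply ENNReal.tsum_le_tsum
        intro j
        calc ∫⁻ θ in Set.Ioc (0:ℝ) (2*π), ‖f j θ‖₊ ∂volume
            ≤ ∫⁻ _ in Set.Ioc (0:ℝ) (2*π), ENNReal.ofReal (c j) ∂volume := by
              apply MeasureTheory.lintegral_mono
              intro θ
              simp only [← enorm_eq_nnnorm, ← ofReal_norm]
              exact ENNReal.ofReal_le_ofReal (by simpa [Real.norm_eq_abs] using hbound j θ)
          _ = ENNReal.ofReal (c j) * ENNReal.ofReal (2*π) := by
              rw [MeasureTheory.lintegral_const, Measure.restrict_apply_univ,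
                Real.volume_Ioc]
              congr 1
              rw [ENNReal.ofReal_eq_ofReal_iff (by linarith [Real.pi_pos]) (by positivity)]
              ring
  have e1 : ∀ θ, (∑' j, c j * |Real.cos (θ - α j)| ^ p) * tr (2*k*θ) = ∑' j, f j θ := by
    intro θ
    rw [← tsum_mul_right]
    congr 1
    ext j
    rw [hf]
    ring
  rw [integral_congr (fun θ _ => e1 θ), integral_of_le h2π, key]
  congr 1
  ext j
  rw [← intervalIntegral.integral_const_mul, ← integral_of_le h2π]

lemma int_cos2k (k : ℕ) (hk : 1 ≤ k) : ∫ θ in (0:ℝ)..(2*π), Real.cos (2*k*θ) = 0 := by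
  have hk0 : (2*(k:ℝ)) ≠ 0 := by positivity
  have hder : ∀ x ∈ Set.uIcc (0:ℝ) (2*π),
      HasDerivAt (fun θ => Real.sin (2*k*θ) / (2*k)) (Real.cos (2*k*x)) x := by
    intro x _
    have h : HasDerivAt (fun θ : ℝ => Real.sin (2*k*θ)) (Real.cos (2*k*x) * (2*k)) x := by
      simpa [Function.comp_def] using (Real.hasDerivAt_sin (2*k*x)).comp x ((hasDerivAt_id x).const_mul (2*(k:ℝ)))
    have := h.div_const (2*k)
    refine this.congr_deriv ?_
    field_simp
  have hcont : Continuous fun θ : ℝ => Real.cos (2*k*θ) :=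
    Real.continuous_cos.comp (continuous_const.mul continuous_id)
  rw [integral_eq_sub_of_hasDerivAt hder (hcont.intervalIntegrable _ _)]
  have e1 : 2*(k:ℝ)*(2*π) = ((4*k:ℕ):ℤ)*π := by push_cast; ring
  rw [e1, Real.sin_int_mul_pi]
  norm_num

lemma int_sin2k (k : ℕ) (hk : 1 ≤ k) : ∫ θ in (0:ℝ)..(2*π), Real.sin (2*k*θ) = 0 := by
  have hder : ∀ x ∈ Set.uIcc (0:ℝ) (2*π),
      HasDerivAt (fun θ => -Real.cos (2*k*θ) / (2*k)) (Real.sin (2*k*x)) x := by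
    intro x _
    have h : HasDerivAt (fun θ : ℝ => Real.cos (2*k*θ)) (-Real.sin (2*k*x) * (2*k)) x := by
      simpa [Function.comp_def] using (Real.hasDerivAt_cos (2*k*x)).comp x ((hasDerivAt_id x).const_mul (2*(k:ℝ)))
    have := (h.neg).div_const (2*k)
    refine this.congr_deriv ?_
    have hk0 : (2*(k:ℝ)) ≠ 0 := by positivity
    field_simp
  have hcont : Continuous fun θ : ℝ => Real.sin (2*k*θ) :=
    Real.continuous_sin.comp (continuous_const.mul continuous_id)
  rw [integral_eq_sub_of_hasDerivAt hder (hcont.intervalIntegrable _ _)]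
  have e1 : 2*(k:ℝ)*(2*π) = ((2*k:ℕ):ℤ)*(2*π) := by push_cast; ring
  have e2 : 2*(k:ℝ)*0 = 0 := by ring
  rw [e1, e2, Real.cos_int_mul_two_pi, Real.cos_zero]
  ring

lemma main_aux {p : ℝ} (hp1 : 1 ≤ p) (hpe : ¬ ∃ k : ℕ, p = 2 * k)
    (c α : ℕ → ℝ) (hc : ∀ j, 0 ≤ c j) (hcs : Summable c)
    (Hone : ∀ θ : ℝ, ∑' j, c j * |Real.cos (θ - α j)| ^ p = 1)
    (j0 : ℕ) (hj0 : 0 < c j0) : False := by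
  have hp0 : (0:ℝ) ≤ p := by linarith
  have hII : ∀ k : ℕ, (4 * II p (2*k)) ≠ 0 := by
    intro k
    have := II_even_ne p hp1 hpe k
    intro h; apply this; linarith
  -- summability helper
  have hsummand : ∀ f : ℕ → ℝ, (∀ j, |f j| ≤ 1) → Summable (fun j => c j * f j) := by
    intro f hf
    apply Summable.of_norm_bounded hcs
    intro j
    rw [Real.norm_eq_abs, abs_mul, abs_of_nonneg (hc j)]
    calc c j * |f j| ≤ c j * 1 := mul_le_mul_of_nonneg_left (hf j) (hc j)
      _ = c j := mul_one _
  -- Fourier coefficients vanish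
  have hA : ∀ m : ℕ, 1 ≤ m → ∑' j, c j * Real.cos (2*m*(α j)) = 0 := by
    intro m hm
    have h1 := interchange hp0 c hc hcs α Real.cos Real.continuous_cos (fun θ => abs_cos_le_one θ) m
    have h2 : ∀ θ : ℝ, (∑' j, c j * |Real.cos (θ - α j)| ^ p) * Real.cos (2*m*θ)
        = Real.cos (2*m*θ) := by intro θ; rw [Hone θ, one_mul]
    rw [integral_congr (fun θ _ => h2 θ), int_cos2k m hm] at h1
    have h3 : ∀ j, c j * ∫ θ in (0:ℝ)..(2*π), |Real.cos (θ - α j)| ^ p * Real.cos (2*m*θ)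
        = (c j * Real.cos (2*m*(α j))) * (4 * II p (2*m)) := by
      intro j; rw [CC_eq hp0 m (α j)]; ring
    rw [tsum_congr h3, tsum_mul_right] at h1
    exact (mul_eq_zero.mp h1.symm).resolve_right (hII m)
  have hB : ∀ m : ℕ, 1 ≤ m → ∑' j, c j * Real.sin (2*m*(α j)) = 0 := by
    intro m hm
    have h1 := interchange hp0 c hc hcs α Real.sin Real.continuous_sin (fun θ => abs_sin_le_one θ) m
    have h2 : ∀ θ : ℝ, (∑' j, c j * |Real.cos (θ - α j)| ^ p) * Real.sin (2*m*θ)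
        = Real.sin (2*m*θ) := by intro θ; rw [Hone θ, one_mul]
    rw [integral_congr (fun θ _ => h2 θ), int_sin2k m hm] at h1
    have h3 : ∀ j, c j * ∫ θ in (0:ℝ)..(2*π), |Real.cos (θ - α j)| ^ p * Real.sin (2*m*θ)
        = (c j * Real.sin (2*m*(α j))) * (4 * II p (2*m)) := by
      intro j; rw [CS_eq hp0 m (α j)]; ring
    rw [tsum_congr h3, tsum_mul_right] at h1
    exact (mul_eq_zero.mp h1.symm).resolve_right (hII m)
  -- the "delta" angles
  set δ : ℕ → ℝ := fun j => 2*(α j - α j0) with hδ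
  set M : ℝ := ∑' j, c j with hM
  -- S m = 0 for m ≥ 1
  have hS : ∀ m : ℕ, 1 ≤ m → ∑' j, c j * Real.cos (m * δ j) = 0 := by
    intro m hm
    have h1 : ∀ j, c j * Real.cos (m * δ j)
        = Real.cos (2*m*(α j0)) * (c j * Real.cos (2*m*(α j)))
          + Real.sin (2*m*(α j0)) * (c j * Real.sin (2*m*(α j))) := by
      intro j
      have e : (m:ℝ) * δ j = 2*m*(α j) - 2*m*(α j0) := by rw [hδ]; ring
      rw [e, Real.cos_sub]
      ring
    rw [tsum_congr h1,
      Summable.tsum_add ((hsummand _ (fun j => abs_cos_le_one _)).mul_left _)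
        ((hsummand _ (fun j => abs_sin_le_one _)).mul_left _),
      tsum_mul_left, tsum_mul_left, hA m hm, hB m hm]
    ring
  -- S for integer differences
  have hSz : ∀ k l : ℕ, k ≠ l → ∑' j, c j * Real.cos ((k:ℝ) * δ j - (l:ℝ) * δ j) = 0 := by
    intro k l hkl
    rcases lt_or_gt_of_ne hkl with h|h
    · -- k < l : cos((k-l)δ) = cos((l-k)δ)
      have m := l - k
      have hm : 1 ≤ l - k := by omega
      have e : ∀ j, (k:ℝ) * δ j - (l:ℝ) * δ j = -(((l - k : ℕ):ℝ) * δ j) := by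
        intro j; push_cast [Nat.cast_sub h.le]; ring
      have : ∀ j, Real.cos ((k:ℝ) * δ j - (l:ℝ) * δ j) = Real.cos (((l-k:ℕ):ℝ) * δ j) := by
        intro j; rw [e j, Real.cos_neg]
      rw [tsum_congr (fun j => by rw [this j])]
      exact hS (l-k) hm
    · have hm : 1 ≤ k - l := by omega
      have e : ∀ j, (k:ℝ) * δ j - (l:ℝ) * δ j = ((k - l : ℕ):ℝ) * δ j := by
        intro j; push_cast [Nat.cast_sub h.le]; ring
      rw [tsum_congr (fun j => by rw [e j])]
      exact hS (k-l) hm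
  have hS0 : ∀ k : ℕ, ∑' j, c j * Real.cos ((k:ℝ) * δ j - (k:ℝ) * δ j) = M := by
    intro k
    rw [hM]
    apply tsum_congr
    intro j
    rw [sub_self, Real.cos_zero, mul_one]
  -- the key double-sum bound
  have key : ∀ N : ℕ, c j0 * ((N:ℝ)+1)^2 ≤ ((N:ℝ)+1) * M := by
    intro N
    set F : ℕ → ℝ := fun j =>
      c j * ((∑ k ∈ Finset.range (N+1), Real.cos (k * δ j))^2
        + (∑ k ∈ Finset.range (N+1), Real.sin (k * δ j))^2) with hF
    have hexp : ∀ j, F j = ∑ q ∈ Finset.range (N+1) ×ˢ Finset.range (N+1),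
        c j * Real.cos ((q.1:ℝ) * δ j - (q.2:ℝ) * δ j) := by
      intro j
      have expand : ∀ (f : ℕ → ℝ), (∑ k ∈ Finset.range (N+1), f k)^2
          = ∑ k ∈ Finset.range (N+1), ∑ l ∈ Finset.range (N+1), f k * f l := by
        intro f; rw [sq, Finset.sum_mul_sum]
      simp only [hF]
      rw [expand, expand, ← Finset.sum_add_distrib, Finset.mul_sum, Finset.sum_product]
      apply Finset.sum_congr rfl
      intro k _
      rw [← Finset.sum_add_distrib, Finset.mul_sum]
      apply Finset.sum_congr rfl
      intro l _
      rw [Real.cos_sub]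
    have hsq : ∀ q : ℕ × ℕ, Summable (fun j => c j * Real.cos ((q.1:ℝ) * δ j - (q.2:ℝ) * δ j)) :=
      fun q => hsummand _ (fun j => abs_cos_le_one _)
    have hFsummable : Summable F := by
      rw [show F = fun j => ∑ q ∈ Finset.range (N+1) ×ˢ Finset.range (N+1),
        c j * Real.cos ((q.1:ℝ) * δ j - (q.2:ℝ) * δ j) from funext hexp]
      exact summable_sum (fun q _ => hsq q)
    have htsum : ∑' j, F j = ((N:ℝ)+1) * M := by
      rw [tsum_congr hexp, Summable.tsum_finsetSum (fun q _ => hsq q)]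
      have hval : ∀ q ∈ Finset.range (N+1) ×ˢ Finset.range (N+1),
          (∑' j, c j * Real.cos ((q.1:ℝ) * δ j - (q.2:ℝ) * δ j))
            = if q.1 = q.2 then M else 0 := by
        intro q _
        by_cases h : q.1 = q.2
        · rw [if_pos h, h]; exact hS0 q.2
        · rw [if_neg h]; exact hSz q.1 q.2 h
      rw [Finset.sum_congr rfl hval, Finset.sum_product]
      have : ∀ k ∈ Finset.range (N+1),
          (∑ l ∈ Finset.range (N+1), if k = l then M else 0) = M := by
        intro k hk
        rw [Finset.sum_ite_eq (Finset.range (N+1)) k (fun _ => M), if_pos hk]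
      rw [Finset.sum_congr rfl this, Finset.sum_const, Finset.card_range,
        nsmul_eq_mul]
      push_cast
      ring
    have hFj0 : F j0 = c j0 * ((N:ℝ)+1)^2 := by
      simp only [hF, hδ, sub_self, mul_zero, Real.cos_zero, Real.sin_zero,
        Finset.sum_const, Finset.card_range, nsmul_eq_mul]
      push_cast
      ring
    have hle : F j0 ≤ ∑' j, F j := by
      apply Summable.le_tsum hFsummable j0
      intro j _
      simp only [hF]
      exact mul_nonneg (hc j) (by positivity)
    rw [htsum] at hle
    rw [hFj0] at hle
    exact hle
  -- conclusion
  have hM0 : 0 ≤ M := tsum_nonneg hc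
  obtain ⟨N, hN⟩ := exists_nat_gt (M / c j0)
  have h1 := key N
  have h2 : c j0 * ((N:ℝ)+1) ≤ M := by
    have hN1 : (0:ℝ) < (N:ℝ)+1 := by positivity
    nlinarith [h1]
  have h3 : M / c j0 < (N:ℝ)+1 := by linarith
  have h4 : M < c j0 * ((N:ℝ)+1) := by
    rw [div_lt_iff₀ hj0] at h3
    linarith [h3]
  linarith

lemma aux2 {p cj A B : ℝ} (hp0 : 0 ≤ p) (hcj : 0 ≤ cj) (hA : 0 ≤ A) (hB : 0 ≤ B)
    (hAB : A^2 + B^2 = 1) : cj ≤ (Real.sqrt 2)^p * (cj * A^p + cj * B^p) := by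
  have hs2 : (0:ℝ) < Real.sqrt 2 := by positivity
  have hmax0 : 0 ≤ max A B := le_trans hA (le_max_left _ _)
  have hmaxsq : 1/2 ≤ (max A B)^2 := by
    rcases max_cases A B with ⟨h1, h2⟩ | ⟨h1, h2⟩ <;> rw [h1] <;> nlinarith
  have hmax : 1/Real.sqrt 2 ≤ max A B := by
    have h1 : (1/Real.sqrt 2)^2 = 1/2 := by
      rw [div_pow, one_pow, Real.sq_sqrt (by norm_num : (0:ℝ) ≤ 2)]
    nlinarith [sq_nonneg (max A B - 1/Real.sqrt 2), sq_nonneg (max A B + 1/Real.sqrt 2)]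
  have hmp : (1/Real.sqrt 2)^p ≤ (max A B)^p :=
    Real.rpow_le_rpow (by positivity) hmax hp0
  have hmaxp : (max A B)^p ≤ A^p + B^p := by
    rcases max_choice A B with h | h <;> rw [h]
    · have : 0 ≤ B^p := Real.rpow_nonneg hB _
      linarith
    · have : 0 ≤ A^p := Real.rpow_nonneg hA _
      linarith
  have hprod : (Real.sqrt 2)^p * (1/Real.sqrt 2)^p = 1 := by
    rw [← Real.mul_rpow (le_of_lt hs2) (by positivity)]
    rw [mul_one_div, div_self (ne_of_gt hs2), Real.one_rpow]
  calc cj = cj * ((Real.sqrt 2)^p * (1/Real.sqrt 2)^p) := by rw [hprod, mul_one]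
    _ = (Real.sqrt 2)^p * (cj * (1/Real.sqrt 2)^p) := by ring
    _ ≤ (Real.sqrt 2)^p * (cj * (max A B)^p) := by
        apply mul_le_mul_of_nonneg_left _ (Real.rpow_nonneg (le_of_lt hs2) _)
        exact mul_le_mul_of_nonneg_left hmp hcj
    _ ≤ (Real.sqrt 2)^p * (cj * A^p + cj * B^p) := by
        apply mul_le_mul_of_nonneg_left _ (Real.rpow_nonneg (le_of_lt hs2) _)
        calc cj * (max A B)^p ≤ cj * (A^p + B^p) := mul_le_mul_of_nonneg_left hmaxp hcj
          _ = cj * A^p + cj * B^p := by ring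

/-- For `n ≥ 2` and `p ≥ 1` not an even integer, `ℓ_2^n` does not embed
linearly isometrically into `ℓ_p`. -/
theorem euclidean_n_not_embeds_lp
    (n : ℕ) (hn : 2 ≤ n) (p : ℝ) (hp : 1 ≤ p) (hpe : ¬ ∃ k : ℕ, p = 2 * k) :
    ¬ ∃ T : (EuclideanSpace ℝ (Fin n)) →ₗ[ℝ] (ℕ → ℝ),
      ∀ x : EuclideanSpace ℝ (Fin n),
        Summable (fun j => |T x j| ^ p) ∧ ∑' j, |T x j| ^ p = ‖x‖ ^ p := by
  rintro ⟨T, hT⟩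
  have hp0 : (0:ℝ) ≤ p := by linarith
  set i0 : Fin n := ⟨0, by omega⟩ with hi0
  set i1 : Fin n := ⟨1, by omega⟩ with hi1
  have hne : i0 ≠ i1 := by simp [hi0, hi1, Fin.ext_iff]
  set e0 : EuclideanSpace ℝ (Fin n) := EuclideanSpace.single i0 (1:ℝ) with he0
  set e1 : EuclideanSpace ℝ (Fin n) := EuclideanSpace.single i1 (1:ℝ) with he1
  set u : ℕ → ℝ := T e0 with hu
  set v : ℕ → ℝ := T e1 with hv
  set z : ℕ → ℂ := fun j => ⟨u j, v j⟩ with hz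
  set c : ℕ → ℝ := fun j => (‖z j‖) ^ p with hcdef
  set α : ℕ → ℝ := fun j => Complex.arg (z j) with hα
  set x : ℝ → EuclideanSpace ℝ (Fin n) := fun θ => Real.cos θ • e0 + Real.sin θ • e1 with hx
  -- T (x θ) j = |z j| * cos (θ - α j)
  have hTx : ∀ θ j, T (x θ) j = ‖z j‖ * Real.cos (θ - α j) := by
    intro θ j
    have h1 : T (x θ) = Real.cos θ • u + Real.sin θ • v := by
      rw [hx]; simp only [map_add, LinearMap.map_smul]; rfl
    have h2 : T (x θ) j = Real.cos θ * u j + Real.sin θ * v j := by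
      rw [h1]; simp [Pi.add_apply, Pi.smul_apply, smul_eq_mul]
    have hre : ‖z j‖ * Real.cos (α j) = u j := by
      rw [hα]; exact Complex.norm_mul_cos_arg (z j)
    have him : ‖z j‖ * Real.sin (α j) = v j := by
      rw [hα]; exact Complex.norm_mul_sin_arg (z j)
    rw [h2, ← hre, ← him, Real.cos_sub]
    ring
  -- norm of x θ is 1
  have hnorm : ∀ θ, ‖x θ‖ = 1 := by
    intro θ
    have h00 : ⟪e0, e0⟫ = 1 := by
      rw [he0, EuclideanSpace.inner_single_left]
      simp [EuclideanSpace.single_apply]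
    have h11 : ⟪e1, e1⟫ = 1 := by
      rw [he1, EuclideanSpace.inner_single_left]
      simp [EuclideanSpace.single_apply]
    have h01 : ⟪e0, e1⟫ = 0 := by
      rw [he0, EuclideanSpace.inner_single_left]
      simp [he1, EuclideanSpace.single_apply, hne]
    have h10 : ⟪e1, e0⟫ = 0 := by
      rw [he1, EuclideanSpace.inner_single_left]
      simp [he0, EuclideanSpace.single_apply, Ne.symm hne]
    have hinner : ⟪x θ, x θ⟫ = 1 := by
      rw [hx]
      simp only [inner_add_left, inner_add_right, real_inner_smul_left, real_inner_smul_right,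
        h00, h11, h01, h10]
      nlinarith [Real.sin_sq_add_cos_sq θ]
    have h2 : ‖x θ‖ * ‖x θ‖ = 1 := by
      rw [← real_inner_self_eq_norm_mul_norm, hinner]
    have h3 := norm_nonneg (x θ)
    nlinarith
  -- term rewriting
  have hterm : ∀ θ j, |T (x θ) j| ^ p = c j * |Real.cos (θ - α j)| ^ p := by
    intro θ j
    rw [hTx θ j, abs_mul, abs_of_nonneg (norm_nonneg _),
      Real.mul_rpow (norm_nonneg _) (abs_nonneg _)]
  have Hsum : ∀ θ, Summable (fun j => c j * |Real.cos (θ - α j)| ^ p) := by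
    intro θ
    have := (hT (x θ)).1
    apply this.congr
    intro j
    exact hterm θ j
  have Hone : ∀ θ, ∑' j, c j * |Real.cos (θ - α j)| ^ p = 1 := by
    intro θ
    have := (hT (x θ)).2
    rw [hnorm θ, Real.one_rpow] at this
    rw [← this]
    exact tsum_congr (fun j => (hterm θ j).symm)
  have hc : ∀ j, 0 ≤ c j := fun j => Real.rpow_nonneg (norm_nonneg _) _
  -- summability of c
  have hcs : Summable c := by
    apply Summable.of_nonneg_of_le hc (fun j => ?_)
      (((Hsum 0).add (Hsum (π/2))).mul_left ((Real.sqrt 2)^p))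
    have hA : |Real.cos (0 - α j)| ^2 + |Real.cos (π/2 - α j)| ^2 = 1 := by
      rw [zero_sub, Real.cos_neg, Real.cos_pi_div_two_sub, sq_abs, sq_abs]
      exact Real.cos_sq_add_sin_sq (α j)
    have := aux2 (A := |Real.cos (0 - α j)|) (B := |Real.cos (π/2 - α j)|) hp0 (hc j)
      (abs_nonneg _) (abs_nonneg _) hA
    simpa using this
  -- some coefficient is positive
  have hex : ∃ j0, 0 < c j0 := by
    by_contra hall
    push_neg at hall
    have hzero : ∀ j, c j = 0 := fun j => le_antisymm (hall j) (hc j)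
    have := Hone 0
    rw [tsum_congr (fun j => by rw [hzero j, zero_mul])] at this
    rw [tsum_zero] at this
    norm_num at this
  obtain ⟨j0, hj0⟩ := hex
  exact main_aux hp hpe c α hc hcs Hone j0 hj0
end
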